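/- arXiv:2511.10267 — 10 statements merged into one kernel-verified Lean document; each statement's English description precedes it below -/
import Mathlib

section
/- Norm bound on the evolution operator for nonnegative real part (Eq. (norm_len1), time-independent form): Let H and L be Hermitian d×d complex matrices, let α ∈ ℝ satisfy ⟨v, L v⟩ ≤ α‖v‖² for all v ∈ ℂᵈ, let t ≥ 0, and let z ∈ ℂ with Re z ≥ 0. Then the spectral norm of the matrix exponential satisfies ‖exp(t·(iH + zL))‖ ≤ exp(t · Re(z) · α). -/
open Matrix Complex
open scoped Real Matrix.Norms.L2Operator

noncomputable def expBoundPhi {d : ℕ} (v : EuclideanSpace ℂ (Fin d)) :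
    Matrix (Fin d) (Fin d) ℂ →L[ℂ] EuclideanSpace ℂ (Fin d) :=
  LinearMap.toContinuousLinearMap
  { toFun := fun M => toEuclideanCLM (𝕜 := ℂ) M v
    map_add' := by intro M N; simp
    map_smul' := by intro r M; simp }

lemma dissipative_exp_norm_le {d : ℕ} (A : Matrix (Fin d) (Fin d) ℂ) (c : ℝ)
    (key : ∀ w : Fin d → ℂ, (star w ⬝ᵥ A *ᵥ w).re ≤ c * (star w ⬝ᵥ w).re) :
    ‖NormedSpace.exp A‖ ≤ Real.exp c := by
  rw [Matrix.l2_opNorm_def]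
  refine ContinuousLinearMap.opNorm_le_bound _ (Real.exp_pos c).le fun v => ?_
  set u : ℝ → EuclideanSpace ℂ (Fin d) :=
    fun s => expBoundPhi v (NormedSpace.exp (s • A)) with hu_def
  have norm_eq : ∀ w : EuclideanSpace ℂ (Fin d), (inner (𝕜 := ℂ) w w).re = ‖w‖ ^ 2 :=
    fun w => by rw [← inner_self_eq_norm_sq (𝕜 := ℂ) w]; rfl
  have hexp : ∀ s : ℝ, HasDerivAt (fun s : ℝ => NormedSpace.exp (s • A))
      (A * NormedSpace.exp (s • A)) s := fun s => by
    have h := hasDerivAt_exp_smul_const' (𝕂 := ℝ) A s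
    exact h
  have hu : ∀ s, HasDerivAt u (toEuclideanCLM (𝕜 := ℂ) A (u s)) s := by
    intro s
    have h := (((expBoundPhi v).restrictScalars ℝ).hasFDerivAt.comp_hasDerivAt s (hexp s))
    refine h.congr_deriv (Eq.symm ?_)
    show toEuclideanCLM (𝕜 := ℂ) A (u s) = expBoundPhi v (A * NormedSpace.exp (s • A))
    simp [hu_def, expBoundPhi, _root_.map_mul]
  set n : ℝ → ℝ := fun s => (inner (𝕜 := ℂ) (u s) (u s)).re with hn_def
  have hn : ∀ s, HasDerivAt n
      (2 * (inner (𝕜 := ℂ) (u s) (toEuclideanCLM (𝕜 := ℂ) A (u s))).re) s := by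
    intro s
    have h1 := HasDerivAt.inner ℂ (hu s) (hu s)
    have h2 := Complex.reCLM.hasFDerivAt.comp_hasDerivAt s h1
    refine h2.congr_deriv (Eq.symm ?_)
    have : inner (𝕜 := ℂ) (toEuclideanCLM (𝕜 := ℂ) A (u s)) (u s)
        = starRingEnd ℂ (inner (𝕜 := ℂ) (u s) (toEuclideanCLM (𝕜 := ℂ) A (u s))) :=
      (inner_conj_symm _ _).symm
    rw [Complex.reCLM_apply, this, Complex.add_re, Complex.conj_re]
    ring
  have hnn : ∀ s, 0 ≤ n s := fun s => by
    have := norm_eq (u s)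
    rw [hn_def]
    simp only
    rw [this]
    positivity
  have hb : ∀ s, (inner (𝕜 := ℂ) (u s) (toEuclideanCLM (𝕜 := ℂ) A (u s))).re ≤ c * n s := by
    intro s
    have h := key (WithLp.equiv 2 _ (u s))
    have e1 : inner (𝕜 := ℂ) (u s) (toEuclideanCLM (𝕜 := ℂ) A (u s))
        = star (WithLp.equiv 2 _ (u s)) ⬝ᵥ A *ᵥ (WithLp.equiv 2 _ (u s)) := by
      rw [EuclideanSpace.inner_eq_star_dotProduct, dotProduct_comm]; rfl
    have e3 : n s = (star (WithLp.equiv 2 _ (u s)) ⬝ᵥ (WithLp.equiv 2 _ (u s))).re := by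
      show (inner (𝕜 := ℂ) (u s) (u s)).re = _
      rw [EuclideanSpace.inner_eq_star_dotProduct, dotProduct_comm]; rfl
    rw [e1, e3]
    exact h
  set F : ℝ → ℝ := fun s => Real.exp (-(2 * c) * s) * n s with hF_def
  have hF : ∀ s, HasDerivAt F
      ((-(2 * c)) * Real.exp (-(2 * c) * s) * n s +
        Real.exp (-(2 * c) * s) *
          (2 * (inner (𝕜 := ℂ) (u s) (toEuclideanCLM (𝕜 := ℂ) A (u s))).re)) s := by
    intro s
    have h1 : HasDerivAt (fun s : ℝ => Real.exp (-(2 * c) * s))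
        (Real.exp (-(2 * c) * s) * (-(2 * c))) s := by
      simpa using ((hasDerivAt_id s).const_mul (-(2 * c))).exp
    have h2 := h1.mul (hn s)
    refine h2.congr_deriv (Eq.symm ?_)
    ring
  have hder : ∀ s, deriv F s ≤ 0 := by
    intro s
    rw [(hF s).deriv]
    nlinarith [hb s, hnn s, (Real.exp_pos (-(2 * c) * s)).le]
  have hanti : Antitone F :=
    antitone_of_deriv_nonpos (fun s => (hF s).differentiableAt) hder
  have h10 : F 1 ≤ F 0 := hanti zero_le_one
  have hu0 : u 0 = v := by
    simp [hu_def, expBoundPhi]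
  have key2 : Real.exp (-(2 * c)) * ‖u 1‖ ^ 2 ≤ ‖v‖ ^ 2 := by
    have e0 : F 0 = ‖v‖ ^ 2 := by
      have hn0 : n 0 = ‖v‖ ^ 2 := by rw [hn_def]; simp only; rw [hu0, norm_eq]
      rw [hF_def]; simp only; rw [hn0]; simp
    have e1 : F 1 = Real.exp (-(2 * c)) * ‖u 1‖ ^ 2 := by
      have hn1 : n 1 = ‖u 1‖ ^ 2 := by rw [hn_def]; simp only; rw [norm_eq]
      rw [hF_def]; simp only; rw [hn1]; simp
    rw [← e0, ← e1]; exact h10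
  have hfinal : ‖u 1‖ ≤ Real.exp c * ‖v‖ := by
    have he : Real.exp (-(2 * c)) * Real.exp (2 * c) = 1 := by
      rw [← Real.exp_add]; simp
    have h1 : ‖u 1‖ ^ 2 ≤ Real.exp (2 * c) * ‖v‖ ^ 2 := by
      have h2 := mul_le_mul_of_nonneg_left key2 (Real.exp_pos (2 * c)).le
      rwa [← mul_assoc, mul_comm (Real.exp (2 * c)) (Real.exp (-(2 * c))), he, one_mul] at h2
    have h3 : (Real.exp c * ‖v‖) ^ 2 = Real.exp (2 * c) * ‖v‖ ^ 2 := by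
      rw [mul_pow, sq (Real.exp c), ← Real.exp_add, two_mul]
    have hsq : ‖u 1‖ ^ 2 ≤ (Real.exp c * ‖v‖) ^ 2 := by rw [h3]; exact h1
    have h4 := Real.sqrt_le_sqrt hsq
    rwa [Real.sqrt_sq (norm_nonneg _), Real.sqrt_sq (by positivity)] at h4
  have hgoal : ‖u 1‖ = ‖((toEuclideanLin (𝕜 := ℂ) (m := Fin d) (n := Fin d)).trans
      LinearMap.toContinuousLinearMap) (NormedSpace.exp A) v‖ := by
    rw [hu_def]; simp only [one_smul]; rfl
  rw [← hgoal]
  exact hfinal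

lemma herm_dot_im_zero {d : ℕ} {M : Matrix (Fin d) (Fin d) ℂ} (hM : M.IsHermitian)
    (w : Fin d → ℂ) : (star w ⬝ᵥ M *ᵥ w).im = 0 := by
  have h1 : star (star w ⬝ᵥ M *ᵥ w) = star w ⬝ᵥ M *ᵥ w := by
    conv_rhs => rw [Matrix.star_dotProduct]
    congr 1
    rw [Matrix.star_mulVec, Matrix.dotProduct_mulVec, hM.eq]
  have h2 : -(star w ⬝ᵥ M *ᵥ w).im = (star w ⬝ᵥ M *ᵥ w).im := by
    simpa [Complex.star_def] using congrArg Complex.im h1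
  linarith


/-- Norm bound on the evolution operator for nonnegative real part (Eq. (norm_len1),
time-independent form): if `H, L` are Hermitian, `⟨v, L v⟩ ≤ α‖v‖²` for all `v`,
`t ≥ 0` and `Re z ≥ 0`, then `‖exp (t (iH + zL))‖ ≤ exp (t ⬝ Re z ⬝ α)` in the
spectral (ℓ²→ℓ²) norm. -/
theorem exp_norm_bound_re_nonneg
    (d : ℕ) (H L : Matrix (Fin d) (Fin d) ℂ)
    (hH : H.IsHermitian) (hL : L.IsHermitian)
    (α : ℝ)
    (hα : ∀ v : Fin d → ℂ, (star v ⬝ᵥ L *ᵥ v).re ≤ α * (star v ⬝ᵥ v).re)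
    (t : ℝ) (ht : 0 ≤ t) (z : ℂ) (hz : 0 ≤ z.re) :
    ‖NormedSpace.exp ((t : ℂ) • (Complex.I • H + z • L))‖ ≤ Real.exp (t * z.re * α) := by
  apply dissipative_exp_norm_le
  intro w
  have hHr := herm_dot_im_zero hH w
  have hLr := herm_dot_im_zero hL w
  have expand : star w ⬝ᵥ ((t : ℂ) • (Complex.I • H + z • L)) *ᵥ w
      = (t : ℂ) * (Complex.I * (star w ⬝ᵥ H *ᵥ w) + z * (star w ⬝ᵥ L *ᵥ w)) := by
    simp [Matrix.add_mulVec, Matrix.smul_mulVec, dotProduct_add,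
      dotProduct_smul, smul_eq_mul, mul_add]
  rw [expand]
  have hre : ((t : ℂ) * (Complex.I * (star w ⬝ᵥ H *ᵥ w) + z * (star w ⬝ᵥ L *ᵥ w))).re
      = (t * z.re) * (star w ⬝ᵥ L *ᵥ w).re := by
    simp [Complex.mul_re, Complex.add_re, Complex.add_im, Complex.mul_im, hHr, hLr]
    ring
  rw [hre]
  have h := mul_le_mul_of_nonneg_left (hα w) (mul_nonneg ht hz)
  calc (t * z.re) * (star w ⬝ᵥ L *ᵥ w).re
      ≤ (t * z.re) * (α * (star w ⬝ᵥ w).re) := h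
    _ = t * z.re * α * (star w ⬝ᵥ w).re := by ring
end

section
/- Norm bound on the evolution operator for nonpositive real part (Eq. (norm_len2), time-independent form): Let H and L be Hermitian d×d complex matrices, let β ∈ ℝ satisfy β‖v‖² ≤ ⟨v, L v⟩ for all v ∈ ℂᵈ, let t ≥ 0, and let z ∈ ℂ with Re z ≤ 0. Then the spectral norm of the matrix exponential satisfies ‖exp(t·(iH + zL))‖ ≤ exp(t · Re(z) · β). -/
open Matrix Complex
open scoped Real Matrix.Norms.L2Operator ComplexInnerProductSpace

noncomputable def matApply (d : ℕ) (v : EuclideanSpace ℂ (Fin d)) :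
    Matrix (Fin d) (Fin d) ℂ →L[ℂ] EuclideanSpace ℂ (Fin d) :=
  LinearMap.toContinuousLinearMap
    { toFun := fun M => toEuclideanCLM (𝕜 := ℂ) M v
      map_add' := by intro M N; simp
      map_smul' := by intro c M; simp }

lemma exp_contraction (d : ℕ) (B : Matrix (Fin d) (Fin d) ℂ)
    (hB : ∀ w : Fin d → ℂ, (star w ⬝ᵥ B *ᵥ w).re ≤ 0) :
    ‖NormedSpace.exp B‖ ≤ 1 := by
  have key : ∀ v : EuclideanSpace ℂ (Fin d),
      ‖toEuclideanCLM (𝕜 := ℂ) (NormedSpace.exp B) v‖ ≤ ‖v‖ := by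
    intro v
    set g : ℝ → Matrix (Fin d) (Fin d) ℂ :=
      fun s => NormedSpace.exp ((s : ℂ) • B) with hgdef
    set w : ℝ → EuclideanSpace ℂ (Fin d) := fun s => matApply d v (g s) with hwdef
    have hg : ∀ s : ℝ, HasDerivAt g (B * g s) s := by
      intro s
      have h := (hasDerivAt_exp_smul_const' B (s : ℂ)).scomp s
        (Complex.ofRealCLM.hasDerivAt (x := s))
      simp at h; exact h
    have hw : ∀ s : ℝ, HasDerivAt w (toEuclideanCLM (𝕜 := ℂ) B (w s)) s := by
      intro s
      have h := HasFDerivAt.comp_hasDerivAt s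
        (((matApply d v).restrictScalars ℝ).hasFDerivAt (x := g s)) (hg s)
      refine (h.congr_deriv ?_)
      refine Eq.symm ?_
      show toEuclideanCLM (𝕜 := ℂ) B (toEuclideanCLM (𝕜 := ℂ) (g s) v) = matApply d v (B * g s)
      simp [matApply, _root_.map_mul]
    set F : ℝ → ℝ := fun s => RCLike.re (K := ℂ) ⟪w s, w s⟫ with hFdef
    have hF : ∀ s : ℝ, HasDerivAt F
        (2 * RCLike.re (K := ℂ) ⟪w s, toEuclideanCLM (𝕜 := ℂ) B (w s)⟫) s := by
      intro s
      have h1 := (hw s).inner ℂ (hw s)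
      have h2 := Complex.reCLM.hasFDerivAt.comp_hasDerivAt s h1
      refine (h2.congr_deriv ?_)
      refine Eq.symm ?_
      have hre : ∀ c : ℂ, Complex.reCLM c = RCLike.re (K := ℂ) c := fun c => rfl
      simp only [ContinuousLinearMap.coe_comp', Function.comp_apply, map_add, hre]
      rw [inner_re_symm (𝕜 := ℂ) (toEuclideanCLM (𝕜 := ℂ) B (w s)) (w s)]
      ring
    have hder : ∀ s : ℝ, deriv F s ≤ 0 := by
      intro s
      rw [(hF s).deriv]
      have hip : ⟪w s, toEuclideanCLM (𝕜 := ℂ) B (w s)⟫ =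
          star (w s).ofLp ⬝ᵥ B *ᵥ (w s).ofLp := by
        rw [EuclideanSpace.inner_eq_star_dotProduct, ofLp_toEuclideanCLM, dotProduct_comm]
      have : RCLike.re (K := ℂ) ⟪w s, toEuclideanCLM (𝕜 := ℂ) B (w s)⟫ ≤ 0 := by
        rw [hip]; exact hB _
      linarith
    have hanti : Antitone F :=
      antitone_of_deriv_nonpos (fun s => (hF s).differentiableAt) hder
    have h01 : F 1 ≤ F 0 := hanti (by norm_num)
    have hw0 : w 0 = v := by
      simp [hwdef, hgdef, matApply]
    have hw1 : w 1 = toEuclideanCLM (𝕜 := ℂ) (NormedSpace.exp B) v := by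
      simp [hwdef, hgdef, matApply]
    have hF0 : F 0 = ‖v‖ ^ 2 := by rw [hFdef]; simp only [hw0]; exact inner_self_eq_norm_sq v
    have hF1 : F 1 = ‖toEuclideanCLM (𝕜 := ℂ) (NormedSpace.exp B) v‖ ^ 2 := by
      rw [hFdef]; simp only [hw1]; exact inner_self_eq_norm_sq _
    rw [hF0, hF1] at h01
    exact (pow_le_pow_iff_left₀ (norm_nonneg _) (norm_nonneg _) two_ne_zero).mp h01
  rw [Matrix.cstar_norm_def]
  exact ContinuousLinearMap.opNorm_le_bound _ zero_le_one (fun v => by simpa using key v)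

lemma herm_quad_im (d : ℕ) (K : Matrix (Fin d) (Fin d) ℂ) (hK : K.IsHermitian)
    (w : Fin d → ℂ) : (star w ⬝ᵥ K *ᵥ w).im = 0 := by
  rw [← Complex.conj_eq_iff_im]
  calc (starRingEnd ℂ) (star w ⬝ᵥ K *ᵥ w)
      = star (star w ⬝ᵥ K *ᵥ w) := rfl
    _ = star (K *ᵥ w) ⬝ᵥ w := by rw [← Matrix.star_dotProduct]
    _ = (star w ᵥ* Kᴴ) ⬝ᵥ w := by rw [Matrix.star_mulVec]
    _ = star w ⬝ᵥ K *ᵥ w := by rw [hK.eq, ← Matrix.dotProduct_mulVec]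


/-- Norm bound on the evolution operator for nonpositive real part (Eq. (norm_len2),
time-independent form): if `H, L` are Hermitian, `β‖v‖² ≤ ⟨v, L v⟩` for all `v`,
`t ≥ 0` and `Re z ≤ 0`, then `‖exp (t (iH + zL))‖ ≤ exp (t ⬝ Re z ⬝ β)` in the
spectral (ℓ²→ℓ²) norm. -/
theorem exp_norm_bound_re_nonpos
    (d : ℕ) (H L : Matrix (Fin d) (Fin d) ℂ)
    (hH : H.IsHermitian) (hL : L.IsHermitian)
    (β : ℝ)
    (hβ : ∀ v : Fin d → ℂ, β * (star v ⬝ᵥ v).re ≤ (star v ⬝ᵥ L *ᵥ v).re)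
    (t : ℝ) (ht : 0 ≤ t) (z : ℂ) (hz : z.re ≤ 0) :
    ‖NormedSpace.exp ((t : ℂ) • (Complex.I • H + z • L))‖ ≤ Real.exp (t * z.re * β) := by
  set μ : ℝ := t * z.re * β with hμdef
  set A : Matrix (Fin d) (Fin d) ℂ := (t : ℂ) • (Complex.I • H + z • L) with hAdef
  set B : Matrix (Fin d) (Fin d) ℂ := A - (μ : ℂ) • 1 with hBdef
  have hB : ∀ w : Fin d → ℂ, (star w ⬝ᵥ B *ᵥ w).re ≤ 0 := by
    intro w
    have hqH := herm_quad_im d H hH w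
    have hqL := herm_quad_im d L hL w
    have hn : (star w ⬝ᵥ w).im = 0 := by
      have := herm_quad_im d 1 isHermitian_one w
      rwa [Matrix.one_mulVec] at this
    have hexp : star w ⬝ᵥ B *ᵥ w =
        (t : ℂ) * (Complex.I * (star w ⬝ᵥ H *ᵥ w) + z * (star w ⬝ᵥ L *ᵥ w))
          - (μ : ℂ) * (star w ⬝ᵥ w) := by
      simp [hBdef, hAdef, Matrix.sub_mulVec, Matrix.add_mulVec, Matrix.smul_mulVec,
        Matrix.one_mulVec, dotProduct_sub, dotProduct_add, dotProduct_smul,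
        smul_eq_mul, mul_add]
    rw [hexp]
    have h1 : z.re * (star w ⬝ᵥ L *ᵥ w).re ≤ z.re * (β * (star w ⬝ᵥ w).re) :=
      mul_le_mul_of_nonpos_left (hβ w) hz
    have h2 : t * (z.re * (star w ⬝ᵥ L *ᵥ w).re) ≤ t * (z.re * (β * (star w ⬝ᵥ w).re)) :=
      mul_le_mul_of_nonneg_left h1 ht
    simp only [Complex.sub_re, Complex.mul_re, Complex.add_re, Complex.add_im,
      Complex.ofReal_re, Complex.ofReal_im, Complex.I_re, Complex.I_im, Complex.mul_im,
      hqH, hqL, hn, hμdef]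
    ring_nf
    ring_nf at h2
    nlinarith [h2]
  have hcomm : Commute ((μ : ℂ) • (1 : Matrix (Fin d) (Fin d) ℂ)) B :=
    (Commute.one_left B).smul_left _
  have hsplit : NormedSpace.exp A =
      NormedSpace.exp ((μ : ℂ) • 1) * NormedSpace.exp B := by
    rw [← Matrix.exp_add_of_commute _ _ hcomm]
    congr 1
    rw [hBdef]; abel
  have hexp1 : NormedSpace.exp ((μ : ℂ) • (1 : Matrix (Fin d) (Fin d) ℂ))
      = Complex.exp (μ : ℂ) • 1 := by
    rw [← Algebra.algebraMap_eq_smul_one, ← NormedSpace.algebraMap_exp_comm,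
      Algebra.algebraMap_eq_smul_one]
    rw [Complex.exp_eq_exp_ℂ]
  rw [hsplit, hexp1, smul_mul_assoc, one_mul, norm_smul]
  have : ‖Complex.exp (μ : ℂ)‖ = Real.exp μ := by
    rw [Complex.norm_exp_ofReal]
  rw [this]
  calc Real.exp μ * ‖NormedSpace.exp B‖ ≤ Real.exp μ * 1 :=
        mul_le_mul_of_nonneg_left (exp_contraction d B hB) (Real.exp_nonneg μ)
    _ = Real.exp μ := mul_one _
end

section
/- Exact polynomial decomposition identity (Eq. (poly_series)): Let H and L be Hermitian d×d complex matrices, let p be a polynomial over ℂ of degree at most D, let m ≥ D + 1, and let q₁, …, q_m be pairwise distinct real numbers. Then p evaluated at the matrix iH + L satisfies p(iH + L) = Σ_{r=1}^{m} p(iH + i·q_r·L) · Π_{r'≠r} ((−i − q_{r'})/(q_r − q_{r'})), where p(M) denotes the evaluation Σ_d a_d M^d of the polynomial p = Σ_d a_d x^d at the matrix M. -/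
open Matrix Complex

-- auxiliary: entry degree bound for powers
lemma pow_entry_natDegree_le {d : ℕ} (B : Matrix (Fin d) (Fin d) (Polynomial ℂ))
    (hB : ∀ a b, (B a b).natDegree ≤ 1) :
    ∀ (k : ℕ) (a b : Fin d), ((B ^ k) a b).natDegree ≤ k := by
  intro k
  induction k with
  | zero =>
    intro a b
    by_cases h : a = b <;> simp [pow_zero, Matrix.one_apply, h]
  | succ n ih =>
    intro a b
    rw [pow_succ, Matrix.mul_apply]
    refine (Polynomial.natDegree_sum_le_of_forall_le _ _ ?_)
    intro c _
    calc ((B ^ n) a c * B c b).natDegree ≤ ((B ^ n) a c).natDegree + (B c b).natDegree :=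
          Polynomial.natDegree_mul_le
      _ ≤ n + 1 := add_le_add (ih a c) (hB c b)

/-- **Exact polynomial decomposition identity** (Eq. (poly_series)).
For Hermitian `H, L`, a polynomial `p` of degree at most `D`, `m ≥ D + 1`, and pairwise
distinct real interpolation points `q₁, …, q_m`, the polynomial of the non-Hermitian
matrix `iH + L` is an exact finite linear combination of polynomials of the Hermitian
combinations, `p(iH + L) = ∑ᵣ p(iH + i qᵣ L) ⬝ ∏_{r'≠r} (-i - q_{r'})/(qᵣ - q_{r'})`. -/
theorem poly_decomposition_identity
    (d : ℕ) (H L : Matrix (Fin d) (Fin d) ℂ)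
    (hH : H.IsHermitian) (hL : L.IsHermitian)
    (D : ℕ) (p : Polynomial ℂ) (hp : p.natDegree ≤ D)
    (m : ℕ) (hm : D + 1 ≤ m)
    (q : Fin m → ℝ) (hq_inj : Function.Injective q) :
    Polynomial.aeval (Complex.I • H + L) p =
      ∑ r : Fin m,
        (∏ r' ∈ Finset.univ.erase r,
            ((-Complex.I - (q r' : ℂ)) / ((q r : ℂ) - (q r' : ℂ)))) •
          Polynomial.aeval (Complex.I • H + (Complex.I * (q r : ℂ)) • L) p := by
  classical
  -- the matrix over ℂ[X]
  set B : Matrix (Fin d) (Fin d) (Polynomial ℂ) :=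
    (Complex.I : ℂ) • H.map Polynomial.C + (Polynomial.X : Polynomial ℂ) • L.map Polynomial.C with hBdef
  have hB1 : ∀ a b, (B a b).natDegree ≤ 1 := by
    intro a b
    have : B a b = Polynomial.C (Complex.I * H a b) + Polynomial.X * Polynomial.C (L a b) := by
      simp [hBdef, Matrix.add_apply, Matrix.smul_apply, Matrix.map_apply, smul_eq_mul,
        Polynomial.smul_eq_C_mul, Polynomial.C_mul]
    rw [this]
    refine le_trans (Polynomial.natDegree_add_le _ _) (max_le (by rw [Polynomial.natDegree_C]; omega) ?_)
    exact le_trans Polynomial.natDegree_mul_le (by simp)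
  -- evaluation of B at z
  have hφ : ∀ z : ℂ, ∀ f : Polynomial ℂ,
      ((Polynomial.aeval z).mapMatrix (Polynomial.aeval B f)) =
        Polynomial.aeval (Complex.I • H + z • L) f := by
    intro z f
    rw [← Polynomial.aeval_algHom_apply]
    congr 1
    ext a b
    simp [hBdef, Matrix.add_apply, Matrix.smul_apply, Matrix.map_apply, smul_eq_mul]
    ring
  -- degree bound of entries of aeval B p
  have hdeg : ∀ a b, ((Polynomial.aeval B p) a b).natDegree ≤ D := by
    intro a b
    rw [Polynomial.aeval_eq_sum_range]
    rw [Matrix.sum_apply]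
    refine Polynomial.natDegree_sum_le_of_forall_le _ _ ?_
    intro k hk
    simp only [Matrix.smul_apply]
    refine le_trans (Polynomial.natDegree_smul_le _ _) ?_
    refine le_trans (pow_entry_natDegree_le B hB1 k a b) ?_
    have := Finset.mem_range.mp hk
    omega
  -- nodes
  set v : Fin m → ℂ := fun r => Complex.I * (q r : ℂ) with hv
  have hvinj : Set.InjOn v (Finset.univ : Finset (Fin m)) := by
    intro a _ b _ hab
    apply hq_inj
    have : (q a : ℂ) = (q b : ℂ) := by
      simp only [hv] at hab
      replace hab := mul_left_cancel₀ Complex.I_ne_zero hab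
      exact_mod_cast hab
    exact_mod_cast this
  -- entrywise proof
  ext a b
  set f : Polynomial ℂ := (Polynomial.aeval B p) a b with hf
  have hnd : f.natDegree < m := by have h := hdeg a b; rw [← hf] at h; omega
  have hdf : f.degree < ((Finset.univ : Finset (Fin m)).card : ℕ) := by
    refine lt_of_le_of_lt Polynomial.degree_le_natDegree ?_
    rw [Finset.card_univ, Fintype.card_fin]
    exact_mod_cast hnd
  have hval : ∀ z : ℂ, f.eval z = (Polynomial.aeval (Complex.I • H + z • L) p) a b := by
    intro z
    have h1 := hφ z p
    have h2 : ((Polynomial.aeval z).mapMatrix ((Polynomial.aeval B) p)) a b = f.eval z := by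
      simp [AlgHom.mapMatrix_apply, Matrix.map_apply, hf, Polynomial.aeval_def,
        Polynomial.eval_eq_sum, Polynomial.eval₂_eq_sum]
    rw [← h2, h1]
  have key : f.eval 1 = ∑ r : Fin m,
      (∏ r' ∈ Finset.univ.erase r,
        ((-Complex.I - (q r' : ℂ)) / ((q r : ℂ) - (q r' : ℂ)))) * f.eval (v r) := by
    conv_lhs => rw [Lagrange.eq_interpolate hvinj hdf]
    rw [Lagrange.interpolate_apply, Polynomial.eval_finset_sum]
    refine Finset.sum_congr rfl fun r _ => ?_
    rw [Polynomial.eval_mul, Polynomial.eval_C, mul_comm]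
    congr 1
    unfold Lagrange.basis
    rw [Polynomial.eval_prod]
    refine Finset.prod_congr rfl fun r' hr' => ?_
    have hner : r' ≠ r := (Finset.mem_erase.mp hr').1
    have hsub : (q r : ℂ) - (q r' : ℂ) ≠ 0 := by
      rw [sub_ne_zero]
      have : q r ≠ q r' := fun h => hner (hq_inj h).symm
      exact_mod_cast this
    simp only [Lagrange.basisDivisor, Polynomial.eval_mul, Polynomial.eval_C,
      Polynomial.eval_sub, Polynomial.eval_X, Polynomial.eval_one, hv]
    have hvsub : Complex.I * (q r : ℂ) - Complex.I * (q r' : ℂ)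
        = Complex.I * ((q r : ℂ) - (q r' : ℂ)) := by ring
    rw [hvsub, mul_inv, Complex.inv_I]
    field_simp
    ring_nf
    simp [Complex.I_sq]
    ring
  have hL1 : (Polynomial.aeval (Complex.I • H + L) p) a b = f.eval 1 := by
    rw [hval 1, one_smul]
  rw [hL1, key]
  simp only [Matrix.sum_apply, Matrix.smul_apply, smul_eq_mul]
  exact Finset.sum_congr rfl fun r _ => by rw [hval (v r)]
end

section
/- Factorial lower bound on a shifted product (auxiliary estimate in the proof of Theorem 3): For every natural number m and every real number z, the product over integers r from −m to m of the complex moduli |z + r + i| satisfies Π_{r=−m}^{m} |z + r + i| ≥ (m!)², where i is the imaginary unit. -/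
open Complex Finset

private lemma pair1 (s x : ℝ) (hs : s^2 ≤ 1/4) :
    (x^2)^2 ≤ ((s+x)^2+1)*((s-x)^2+1) := by
  nlinarith [sq_nonneg s, sq_nonneg x, sq_nonneg (x^2 - s^2), sq_nonneg (s*x)]

private lemma pair2 (s x y : ℝ) (hs : -(1/2) ≤ s) (hx : 1 ≤ x) (hxy : x + 1 ≤ y) :
    (x^2)^2 ≤ ((s+x)^2+1)*((s+y)^2+1) := by
  have h1 : (1:ℝ)/2 ≤ s + x := by linarith
  have h2 : x + 1/2 ≤ s + y := by linarith
  have h3 : x - 1/2 ≤ s + x := by linarith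
  nlinarith [sq_nonneg ((s+x)*(s+y) - 1), sq_nonneg ((s+x) - (s+y)),
    mul_le_mul h3 h2 (by linarith) (by linarith)]

private lemma sqrt_pair (A B c : ℝ) (hA : 0 ≤ A)
    (h : (c^2)^2 ≤ A * B) : c^2 ≤ Real.sqrt A * Real.sqrt B := by
  rw [← Real.sqrt_mul hA]
  calc c^2 = Real.sqrt ((c^2)^2) := by rw [Real.sqrt_sq (sq_nonneg c)]
    _ ≤ Real.sqrt (A*B) := Real.sqrt_le_sqrt h

private lemma lemP1 (a : ℕ) (s : ℝ) (h : a = 0 ∨ s^2 ≤ 1/4) :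
    ((a.factorial : ℝ))^2 ≤ ∏ j ∈ range (2*a+1), Real.sqrt ((s + j - a)^2 + 1) := by
  induction a with
  | zero =>
    simp only [Nat.factorial_zero, Nat.cast_one, one_pow]
    rw [show 2*0+1 = 1 by rfl, Finset.prod_range_one]
    calc (1:ℝ) = Real.sqrt 1 := Real.sqrt_one.symm
      _ ≤ _ := Real.sqrt_le_sqrt (by push_cast; nlinarith)
  | succ a ih =>
    have hs : s^2 ≤ 1/4 := h.resolve_left (by omega)
    have e : 2*(a+1)+1 = (2*a+1)+1+1 := by ring
    have e2 : (∏ j ∈ range (2*a+1), Real.sqrt ((s + ((j+1:ℕ):ℝ) - ((a+1:ℕ):ℝ))^2 + 1))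
        = ∏ j ∈ range (2*a+1), Real.sqrt ((s + j - a)^2 + 1) := by
      refine Finset.prod_congr rfl fun j _ => ?_
      congr 2; push_cast; ring
    rw [e, Finset.prod_range_succ, Finset.prod_range_succ', e2]
    have key : ((a:ℝ)+1)^2 ≤ Real.sqrt ((s + ((0:ℕ):ℝ) - ((a+1:ℕ):ℝ))^2+1) *
        Real.sqrt ((s + ((2*a+2:ℕ):ℝ) - ((a+1:ℕ):ℝ))^2+1) := by
      have h1 : (s + ((0:ℕ):ℝ) - ((a+1:ℕ):ℝ)) = s - ((a:ℝ)+1) := by push_cast; ring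
      have h2 : (s + ((2*a+2:ℕ):ℝ) - ((a+1:ℕ):ℝ)) = s + ((a:ℝ)+1) := by push_cast; ring
      rw [h1, h2]
      refine sqrt_pair _ _ _ (by positivity) ?_
      rw [mul_comm]; exact pair1 s _ hs
    have ihs := ih (Or.inr hs)
    have hnn : (0:ℝ) ≤ ∏ j ∈ range (2*a+1), Real.sqrt ((s + (j:ℝ) - (a:ℝ))^2 + 1) :=
      Finset.prod_nonneg fun j _ => Real.sqrt_nonneg _
    calc (((a+1).factorial : ℝ))^2 = ((a:ℝ)+1)^2 * ((a.factorial : ℝ))^2 := by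
          rw [Nat.factorial_succ]; push_cast; ring
      _ ≤ (Real.sqrt ((s + ((0:ℕ):ℝ) - ((a+1:ℕ):ℝ))^2+1) *
            Real.sqrt ((s + ((2*a+2:ℕ):ℝ) - ((a+1:ℕ):ℝ))^2+1)) *
          (∏ j ∈ range (2*a+1), Real.sqrt ((s + (j:ℝ) - (a:ℝ))^2 + 1)) :=
        mul_le_mul key ihs (by positivity) (by positivity)
      _ = _ := by ring

private lemma lemP2 (b : ℕ) : ∀ (a : ℕ) (s : ℝ), -(1/2) ≤ s →
    ((∏ i ∈ range b, ((a:ℝ) + 1 + i)))^2 ≤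
      ∏ i ∈ range (2*b), Real.sqrt ((s + ((a:ℝ) + 1 + i))^2 + 1) := by
  induction b with
  | zero => intro a s _; simp
  | succ b ih =>
    intro a s hs
    have e : 2*(b+1) = (2*b)+1+1 := by ring
    have e2 : (∏ i ∈ range (2*b), Real.sqrt ((s + ((a:ℝ) + 1 + ((i+1:ℕ):ℝ)))^2 + 1))
        = ∏ i ∈ range (2*b), Real.sqrt ((s + (((a+1:ℕ):ℝ) + 1 + i))^2 + 1) := by
      refine Finset.prod_congr rfl fun i _ => ?_
      congr 3; push_cast; ring
    conv_rhs => rw [e, Finset.prod_range_succ, Finset.prod_range_succ', e2]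
    have key : ((a:ℝ)+1)^2 ≤ Real.sqrt ((s + ((a:ℝ) + 1 + ((0:ℕ):ℝ)))^2+1) *
        Real.sqrt ((s + ((a:ℝ) + 1 + ((2*b+1:ℕ):ℝ)))^2+1) := by
      have h1 : (s + ((a:ℝ) + 1 + ((0:ℕ):ℝ))) = s + ((a:ℝ)+1) := by push_cast; ring
      have h2 : (s + ((a:ℝ) + 1 + ((2*b+1:ℕ):ℝ))) = s + (((a:ℝ)+1) + (2*b+1)) := by
        push_cast; ring
      rw [h1, h2]
      exact sqrt_pair _ _ _ (by positivity)
        (pair2 s ((a:ℝ)+1) (((a:ℝ)+1) + (2*b+1)) hs (by linarith [Nat.cast_nonneg (α := ℝ) a])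
          (by push_cast; linarith [Nat.cast_nonneg (α := ℝ) b]))
    have ihs := ih (a+1) s hs
    have eRHS : (∏ i ∈ range (b+1), ((a:ℝ) + 1 + i))
        = ((a:ℝ)+1) * ∏ i ∈ range b, (((a+1:ℕ):ℝ) + 1 + i) := by
      rw [Finset.prod_range_succ']
      rw [Finset.prod_congr rfl fun i _ => (by push_cast; ring :
        ((a:ℝ) + 1 + ((i+1:ℕ):ℝ)) = (((a+1:ℕ):ℝ) + 1 + i))]
      push_cast; ring
    conv_lhs => rw [eRHS]
    have hQnn : (0:ℝ) ≤ ∏ i ∈ range b, (((a+1:ℕ):ℝ) + 1 + i) :=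
      Finset.prod_nonneg fun i _ => by positivity
    calc (((a:ℝ)+1) * ∏ i ∈ range b, (((a+1:ℕ):ℝ) + 1 + i))^2
        = ((a:ℝ)+1)^2 * (∏ i ∈ range b, (((a+1:ℕ):ℝ) + 1 + i))^2 := by ring
      _ ≤ (Real.sqrt ((s + ((a:ℝ) + 1 + ((0:ℕ):ℝ)))^2+1) *
            Real.sqrt ((s + ((a:ℝ) + 1 + ((2*b+1:ℕ):ℝ)))^2+1)) *
          (∏ i ∈ range (2*b), Real.sqrt ((s + (((a+1:ℕ):ℝ) + 1 + i))^2 + 1)) :=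
        mul_le_mul key ihs (by positivity) (by positivity)
      _ = _ := by ring

private lemma lemA (a b : ℕ) (s : ℝ) (hs1 : -(1/2) ≤ s) (hs2 : a = 0 ∨ s ≤ 1/2) :
    (((a+b).factorial : ℝ))^2 ≤
      ∏ j ∈ range (2*(a+b)+1), Real.sqrt ((s + j - a)^2 + 1) := by
  have e : 2*(a+b)+1 = (2*a+1) + 2*b := by ring
  rw [e, Finset.prod_range_add]
  have e2 : (∏ i ∈ range (2*b), Real.sqrt ((s + ((2*a+1+i:ℕ):ℝ) - (a:ℝ))^2 + 1))
      = ∏ i ∈ range (2*b), Real.sqrt ((s + ((a:ℝ) + 1 + i))^2 + 1) := by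
    refine Finset.prod_congr rfl fun i _ => ?_
    congr 2; push_cast; ring
  rw [e2]
  have hfac : (((a+b).factorial : ℝ)) = (a.factorial : ℝ) * ∏ i ∈ range b, ((a:ℝ) + 1 + i) := by
    rw [← Finset.prod_range_add_one_eq_factorial (a+b), Finset.prod_range_add,
      Finset.prod_range_add_one_eq_factorial]
    push_cast
    congr 1
    exact Finset.prod_congr rfl fun i _ => by push_cast; ring
  have h1 := lemP1 a s (by
    rcases hs2 with h | h
    · exact Or.inl h
    · exact Or.inr (by nlinarith))
  have h2 := lemP2 b a s hs1
  rw [hfac]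
  calc ((a.factorial : ℝ) * ∏ i ∈ range b, ((a:ℝ) + 1 + i))^2
      = (a.factorial : ℝ)^2 * (∏ i ∈ range b, ((a:ℝ) + 1 + i))^2 := by ring
    _ ≤ (∏ j ∈ range (2*a+1), Real.sqrt ((s + j - a)^2 + 1)) *
        (∏ i ∈ range (2*b), Real.sqrt ((s + ((a:ℝ) + 1 + i))^2 + 1)) :=
      mul_le_mul h1 h2 (by positivity) (Finset.prod_nonneg fun j _ => Real.sqrt_nonneg _)

private lemma lemB (m : ℕ) (z : ℝ) (h : round (-z) ≤ 0) :
    ((m.factorial : ℝ))^2 ≤ ∏ j ∈ range (2*m+1), Real.sqrt ((z + j - m)^2 + 1) := by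
  set n : ℤ := max (-(m:ℤ)) (round (-z)) with hn
  have hn1 : -(m:ℤ) ≤ n := le_max_left _ _
  have hn2 : n ≤ 0 := max_le (by omega) h
  have hround : |(-z) - (round (-z) : ℝ)| ≤ 1/2 := abs_sub_round (-z)
  have hrlb : -(1/2:ℝ) ≤ z + (round (-z) : ℝ) := by
    rw [abs_le] at hround; linarith [hround.2]
  set a : ℕ := (n + m).toNat with hadef
  have ha : (a : ℤ) = n + m := Int.toNat_of_nonneg (by omega)
  have hab : a ≤ m := by omega
  obtain ⟨b, hb⟩ : ∃ b, m = a + b := ⟨m - a, by omega⟩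
  set s : ℝ := z + (n : ℝ) with hsdef
  have hcast : (a : ℝ) = (n : ℝ) + m := by exact_mod_cast congrArg (Int.cast : ℤ → ℝ) ha
  have hterm : ∀ j : ℕ, (z + (j:ℝ) - m) = (s + (j:ℝ) - a) := by
    intro j; rw [hcast]; ring
  have hs1 : -(1/2:ℝ) ≤ s := by
    have : (round (-z) : ℝ) ≤ (n : ℝ) := by exact_mod_cast le_max_right _ _
    simp only [hsdef]; linarith
  have hs2 : a = 0 ∨ s ≤ 1/2 := by
    rcases le_or_gt (round (-z)) (-(m:ℤ)) with hc | hc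
    · left
      have : n = -(m:ℤ) := max_eq_left hc
      omega
    · right
      have hne : n = round (-z) := max_eq_right hc.le
      rw [abs_le] at hround
      have : (n : ℝ) = (round (-z) : ℝ) := by rw [hne]
      simp only [hsdef, this]; linarith [hround.1]
  have := lemA a b s hs1 hs2
  rw [← hb] at this
  calc ((m.factorial : ℝ))^2 ≤ ∏ j ∈ range (2*m+1), Real.sqrt ((s + j - a)^2 + 1) := this
    _ = _ := Finset.prod_congr rfl fun j _ => by rw [hterm j]

/-- **Factorial lower bound on a shifted product** (auxiliary estimate in the proof of
Theorem 3). For every natural `m` and real `z`,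
`∏_{r=-m}^{m} |z + r + i| ≥ (m!)²`. -/
theorem prod_abs_shift_ge_factorial_sq (m : ℕ) (z : ℝ) :
    ((Nat.factorial m : ℝ)) ^ 2 ≤
      ∏ r ∈ Finset.Icc (-(m : ℤ)) (m : ℤ), ‖(z : ℂ) + (r : ℂ) + Complex.I‖ := by
  have hconv : ∀ r : ℤ, ‖(z:ℂ) + (r:ℂ) + Complex.I‖
      = Real.sqrt ((z + (r:ℝ))^2 + 1) := by
    intro r
    rw [show (z:ℂ) + (r:ℂ) + Complex.I = ((z + (r:ℝ) : ℝ) : ℂ) + ((1:ℝ):ℂ) * Complex.I by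
      push_cast; ring, Complex.norm_add_mul_I]
    norm_num
  have hre : (∏ r ∈ Finset.Icc (-(m : ℤ)) (m : ℤ), ‖(z:ℂ) + (r:ℂ) + Complex.I‖)
      = ∏ j ∈ Finset.range (2*m+1), Real.sqrt ((z + (j:ℝ) - m)^2 + 1) := by
    refine Finset.prod_nbij' (fun r => (r + m).toNat) (fun j => (j : ℤ) - m) ?_ ?_ ?_ ?_ ?_
    · intro r hr
      simp only [Finset.mem_Icc] at hr
      simp only [Finset.mem_range]
      omega
    · intro j hj
      simp only [Finset.mem_range] at hj
      simp only [Finset.mem_Icc]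
      omega
    · intro r hr
      simp only [Finset.mem_Icc] at hr
      show (((r + m).toNat : ℤ)) - m = r
      omega
    · intro j hj
      simp only [Finset.mem_range] at hj
      show (((j:ℤ) - m + m).toNat) = j
      omega
    · intro r hr
      simp only [Finset.mem_Icc] at hr
      rw [hconv r]
      congr 2
      have : ((((r + m).toNat : ℕ)) : ℝ) = ((r:ℝ) + m) := by
        have : (((r + m).toNat : ℤ)) = r + m := Int.toNat_of_nonneg (by omega)
        exact_mod_cast congrArg (Int.cast : ℤ → ℝ) this
      rw [this]; ring
  rw [hre]
  rcases le_or_gt (round (-z)) 0 with hc | hc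
  · exact lemB m z hc
  · have hz : z ≤ -(1/2:ℝ) := by
      have h1 := abs_sub_round (-z)
      rw [abs_le] at h1
      have : (1:ℝ) ≤ (round (-z) : ℝ) := by exact_mod_cast hc
      linarith [h1.1]
    have hz2 : round (-(-z)) ≤ 0 := by
      rw [neg_neg]
      have h1 := abs_sub_round z
      rw [abs_le] at h1
      have h2 : (round z : ℝ) ≤ 0 := by linarith [h1.1]
      exact_mod_cast h2
    have hrefl : (∏ j ∈ Finset.range (2*m+1), Real.sqrt ((z + (j:ℝ) - m)^2 + 1))
        = ∏ j ∈ Finset.range (2*m+1), Real.sqrt (((-z) + (j:ℝ) - m)^2 + 1) := by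
      rw [← Finset.prod_range_reflect]
      refine Finset.prod_congr rfl fun j hj => ?_
      simp only [Finset.mem_range] at hj
      have hcast : (((2*m+1-1-j : ℕ)) : ℝ) = 2*(m:ℝ) - j := by
        have : (2*m+1-1-j : ℕ) = 2*m - j := by omega
        rw [this]
        push_cast [Nat.cast_sub (by omega : j ≤ 2*m)]
        ring
      rw [hcast, show (z + (2*(m:ℝ) - (j:ℝ)) - m) = -((-z) + (j:ℝ) - m) by ring, neg_sq]
    rw [hrefl]
    exact lemB m (-z) hz2
end

section
/- Bounded ratio product (auxiliary estimate in the proof of Theorem 3): For every natural number m, Π_{r=1}^{m} (r² + 4)/(r² + 1) ≤ sinh(2π)/(2π). Consequently the full symmetric product satisfies Π_{r=−m}^{m} √((r² + 4)/(r² + 1)) ≤ sinh(2π)/π. -/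
open scoped Real
open Filter Finset

lemma tendsto_aux :
    Tendsto (fun n : ℕ => ∏ j ∈ Finset.range n, ((1 : ℝ) + 4 / ((j : ℝ) + 1) ^ 2)) atTop
      (nhds (Real.sinh (2 * π) / (2 * π))) := by
  have h := Complex.tendsto_euler_sin_prod (2 * Complex.I)
  have hc : (↑π * (2 * Complex.I)) ≠ 0 := by
    simp [Real.pi_ne_zero, Complex.I_ne_zero, Complex.ofReal_ne_zero]
  have h2 := h.const_mul (↑π * (2 * Complex.I))⁻¹
  have h3 : Tendsto (fun n : ℕ => ∏ j ∈ Finset.range n,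
      ((1 : ℂ) - (2 * Complex.I) ^ 2 / ((j : ℂ) + 1) ^ 2)) atTop
      (nhds ((↑π * (2 * Complex.I))⁻¹ * Complex.sin (↑π * (2 * Complex.I)))) := by
    convert h2 using 2 with n
    rw [← mul_assoc, inv_mul_cancel₀ hc, one_mul]
  have hsin : Complex.sin (↑π * (2 * Complex.I)) = ↑(Real.sinh (2 * π)) * Complex.I := by
    rw [show (↑π * (2 * Complex.I)) = (↑(2 * π) : ℂ) * Complex.I by push_cast; ring,
      Complex.sin_mul_I, Complex.ofReal_sinh]
  have hval : (↑π * (2 * Complex.I))⁻¹ * Complex.sin (↑π * (2 * Complex.I))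
      = ↑(Real.sinh (2 * π) / (2 * π)) := by
    rw [hsin]
    field_simp [Complex.I_ne_zero, Real.pi_ne_zero]
    push_cast
    field_simp [Complex.ofReal_ne_zero.2 Real.pi_ne_zero]
  rw [hval] at h3
  have h4 := (Complex.continuous_re.tendsto _).comp h3
  simp only [Complex.ofReal_re] at h4
  refine h4.congr fun n => ?_
  simp only [Function.comp_apply]
  have hprod : (∏ j ∈ Finset.range n, ((1 : ℂ) - (2 * Complex.I) ^ 2 / ((j : ℂ) + 1) ^ 2))
      = ((∏ j ∈ Finset.range n, ((1 : ℝ) + 4 / ((j : ℝ) + 1) ^ 2) : ℝ) : ℂ) := by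
    rw [Complex.ofReal_prod]
    refine Finset.prod_congr rfl fun j _ => ?_
    push_cast
    rw [mul_pow, Complex.I_sq]
    ring
  rw [hprod, Complex.ofReal_re]

lemma prod_aux_le (n : ℕ) :
    ∏ j ∈ Finset.range n, ((1 : ℝ) + 4 / ((j : ℝ) + 1) ^ 2) ≤ Real.sinh (2 * π) / (2 * π) := by
  refine Monotone.ge_of_tendsto ?_ tendsto_aux n
  intro a b hab
  dsimp only
  rw [← Finset.prod_range_mul_prod_Ico _ hab]
  have h1 : (0:ℝ) ≤ ∏ j ∈ Finset.range a, ((1 : ℝ) + 4 / ((j : ℝ) + 1) ^ 2) :=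
    Finset.prod_nonneg fun j _ => by positivity
  have h2 : (1:ℝ) ≤ ∏ j ∈ Finset.Ico a b, ((1 : ℝ) + 4 / ((j : ℝ) + 1) ^ 2) := by
    calc (1:ℝ) = ∏ _j ∈ Finset.Ico a b, (1:ℝ) := by simp
      _ ≤ ∏ j ∈ Finset.Ico a b, ((1 : ℝ) + 4 / ((j : ℝ) + 1) ^ 2) := by
          refine Finset.prod_le_prod (fun _ _ => zero_le_one) fun j _ => ?_
          have : (0:ℝ) ≤ 4 / ((j : ℝ) + 1) ^ 2 := by positivity
          linarith
  exact le_mul_of_one_le_right h1 h2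

lemma key_bound (m : ℕ) :
    ∏ r ∈ Finset.Icc 1 m, (((r : ℝ) ^ 2 + 4) / ((r : ℝ) ^ 2 + 1)) ≤
      Real.sinh (2 * π) / (2 * π) := by
  calc ∏ r ∈ Finset.Icc 1 m, (((r : ℝ) ^ 2 + 4) / ((r : ℝ) ^ 2 + 1))
      ≤ ∏ r ∈ Finset.Icc 1 m, ((1 : ℝ) + 4 / (r : ℝ) ^ 2) := by
        refine Finset.prod_le_prod (fun r _ => by positivity) ?_
        intro r hr
        have hr1 : 1 ≤ r := (Finset.mem_Icc.1 hr).1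
        have hrpos : (0:ℝ) < (r:ℝ) ^ 2 := by
          have : (1:ℝ) ≤ (r:ℝ) := by exact_mod_cast hr1
          nlinarith
        have h' : ((1:ℝ) + 4 / (r:ℝ)^2) = ((r:ℝ)^2 + 4) / (r:ℝ)^2 := by field_simp
        rw [h']
        gcongr
        · nlinarith
    _ = ∏ j ∈ Finset.range m, ((1 : ℝ) + 4 / ((j : ℝ) + 1) ^ 2) := by
        induction m with
        | zero => simp
        | succ k ih =>
          rw [Finset.prod_Icc_succ_top (Nat.one_le_iff_ne_zero.2 (Nat.succ_ne_zero k)),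
            Finset.prod_range_succ, ih]
          push_cast; ring_nf
    _ ≤ Real.sinh (2 * π) / (2 * π) := prod_aux_le m

lemma sym_prod_eq (m : ℕ) :
    ∏ r ∈ Finset.Icc (-(m : ℤ)) (m : ℤ),
      Real.sqrt (((r : ℝ) ^ 2 + 4) / ((r : ℝ) ^ 2 + 1)) =
    2 * ∏ r ∈ Finset.Icc 1 m, (((r : ℝ) ^ 2 + 4) / ((r : ℝ) ^ 2 + 1)) := by
  induction m with
  | zero =>
    norm_num
  | succ k ih =>
    have hset : Finset.Icc (-((k:ℤ)+1)) ((k:ℤ)+1) =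
        insert (-((k:ℤ)+1)) (insert ((k:ℤ)+1) (Finset.Icc (-(k:ℤ)) (k:ℤ))) := by
      ext x; simp only [Finset.mem_Icc, Finset.mem_insert]; omega
    have h1 : ((k:ℤ)+1) ∉ Finset.Icc (-(k:ℤ)) (k:ℤ) := by
      intro hmem; simp only [Finset.mem_Icc, Finset.mem_insert] at hmem; omega
    have h2 : (-((k:ℤ)+1)) ∉ insert ((k:ℤ)+1) (Finset.Icc (-(k:ℤ)) (k:ℤ)) := by
      intro hmem; simp only [Finset.mem_Icc, Finset.mem_insert] at hmem; omega
    have hnat : Finset.Icc 1 (k+1) = insert (k+1) (Finset.Icc 1 k) := by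
      ext x; simp only [Finset.mem_Icc, Finset.mem_insert]; omega
    have hk1 : (k+1) ∉ Finset.Icc 1 k := by simp
    push_cast
    rw [hset, Finset.prod_insert h2, Finset.prod_insert h1, hnat,
      Finset.prod_insert hk1, ih]
    push_cast
    have hterm : (((-((k:ℝ)+1)) ^ 2 + 4) / ((-((k:ℝ)+1)) ^ 2 + 1))
        = ((((k:ℝ)+1)) ^ 2 + 4) / ((((k:ℝ)+1)) ^ 2 + 1) := by ring_nf
    rw [hterm, ← mul_assoc,
      Real.mul_self_sqrt (by positivity : (0:ℝ) ≤ ((((k:ℝ)+1)) ^ 2 + 4) / ((((k:ℝ)+1)) ^ 2 + 1))]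
    ring

/-- **Bounded ratio product** (auxiliary estimate in the proof of Theorem 3).
For every natural `m`, `∏_{r=1}^m (r² + 4)/(r² + 1) ≤ sinh(2π)/(2π)`, and consequently
the full symmetric product satisfies
`∏_{r=-m}^{m} √((r² + 4)/(r² + 1)) ≤ sinh(2π)/π`. -/
theorem prod_ratio_bound (m : ℕ) :
    ∏ r ∈ Finset.Icc 1 m, (((r : ℝ) ^ 2 + 4) / ((r : ℝ) ^ 2 + 1)) ≤
        Real.sinh (2 * π) / (2 * π) ∧
    ∏ r ∈ Finset.Icc (-(m : ℤ)) (m : ℤ),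
        Real.sqrt (((r : ℝ) ^ 2 + 4) / ((r : ℝ) ^ 2 + 1)) ≤ Real.sinh (2 * π) / π := by
  refine ⟨key_bound m, ?_⟩
  rw [sym_prod_eq m]
  have h := key_bound m
  have hpi : (0:ℝ) < π := Real.pi_pos
  have : Real.sinh (2 * π) / π = 2 * (Real.sinh (2 * π) / (2 * π)) := by
    field_simp
  rw [this]
  linarith
end

section
/- Weighted factorial sum bound (auxiliary estimate in the proof of Theorem 3): For every natural number m ≥ 1, Σ_{r=−m}^{m} (Π_{r'=1}^{m} (r'² + 4)) / ((m − r)!·(m + r)!) ≤ sinh(2π)·4^m·(m!)² / (2π·(2m)!). -/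
open scoped Real
open Filter Topology

lemma sinh_prod_bound (m : ℕ) :
    2 * π * ∏ j ∈ Finset.range m, (1 + 4 / ((j : ℝ) + 1) ^ 2) ≤ Real.sinh (2 * π) := by
  set f : ℕ → ℝ := fun n => 2 * π * ∏ j ∈ Finset.range n, (1 + 4 / ((j : ℝ) + 1) ^ 2) with hf
  have hfac : ∀ j : ℕ, (1 : ℝ) ≤ 1 + 4 / ((j : ℝ) + 1) ^ 2 := by
    intro j
    have h : (0 : ℝ) < ((j : ℝ) + 1) ^ 2 := by positivity
    have := div_nonneg (by norm_num : (0 : ℝ) ≤ 4) h.le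
    linarith
  have hmono : Monotone f := by
    intro a b hab
    have h1 : ∏ j ∈ Finset.range a, (1 + 4 / ((j : ℝ) + 1) ^ 2)
        ≤ ∏ j ∈ Finset.range b, (1 + 4 / ((j : ℝ) + 1) ^ 2) := by
      rw [← Finset.prod_range_mul_prod_Ico _ hab]
      have hpos : (0:ℝ) < ∏ j ∈ Finset.range a, (1 + 4 / ((j : ℝ) + 1) ^ 2) :=
        Finset.prod_pos fun i _ => lt_of_lt_of_le one_pos (hfac i)
      have h2 : (1:ℝ) ≤ ∏ j ∈ Finset.Ico a b, (1 + 4 / ((j : ℝ) + 1) ^ 2) := by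
        calc (1:ℝ) = ∏ j ∈ Finset.Ico a b, 1 := by simp
        _ ≤ _ := Finset.prod_le_prod (fun i _ => by norm_num) (fun i _ => hfac i)
      nlinarith
    have hpi : (0:ℝ) < 2 * π := by positivity
    simp only [hf]
    nlinarith
  have htend : Tendsto f atTop (𝓝 (Real.sinh (2 * π))) := by
    have h := (Complex.continuous_im.tendsto _).comp
      (Complex.tendsto_euler_sin_prod (2 * Complex.I))
    have heq : ∀ n, (Function.comp Complex.im
        (fun n : ℕ => ↑π * (2 * Complex.I) *
          ∏ j ∈ Finset.range n, ((1 : ℂ) - (2 * Complex.I) ^ 2 / ((j : ℂ) + 1) ^ 2))) n = f n := by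
      intro n
      have hterm : ∀ j ∈ Finset.range n, (1 : ℂ) - (2 * Complex.I) ^ 2 / ((j : ℂ) + 1) ^ 2
          = ((1 + 4 / ((j : ℝ) + 1) ^ 2 : ℝ) : ℂ) := by
        intro j _
        have h2 : (2 * Complex.I) ^ 2 = -4 := by
          rw [mul_pow, Complex.I_sq]; norm_num
        rw [h2]; push_cast; ring
      simp only [Function.comp_apply, Finset.prod_congr rfl hterm, ← Complex.ofReal_prod]
      have : (↑π * (2 * Complex.I) * ((∏ j ∈ Finset.range n, (1 + 4 / ((j : ℝ) + 1) ^ 2) : ℝ) : ℂ))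
          = ((2 * π * ∏ j ∈ Finset.range n, (1 + 4 / ((j : ℝ) + 1) ^ 2) : ℝ) : ℂ) * Complex.I := by
        push_cast; ring
      rw [this]
      simp only [Complex.mul_im, Complex.ofReal_re, Complex.ofReal_im, Complex.I_im,
        Complex.I_re, mul_one, mul_zero, zero_mul, add_zero, hf]
    have hval : (Complex.sin (↑π * (2 * Complex.I))).im = Real.sinh (2 * π) := by
      have : (↑π * (2 * Complex.I) : ℂ) = ((2 * π : ℝ) : ℂ) * Complex.I := by push_cast; ring
      rw [this, Complex.sin_mul_I, ← Complex.ofReal_sinh]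
      simp only [Complex.mul_im, Complex.I_im, Complex.I_re, mul_one, mul_zero, add_zero]
      exact Complex.ofReal_re _
    rw [← hval]
    exact Tendsto.congr heq h
  exact hmono.ge_of_tendsto htend m


/-- **Weighted factorial sum bound** (auxiliary estimate in the proof of Theorem 3).
For every natural `m ≥ 1`,
`∑_{r=-m}^{m} (∏_{r'=1}^{m} (r'² + 4)) / ((m-r)!(m+r)!) ≤ sinh(2π)·4^m·(m!)²/(2π·(2m)!)`. -/
theorem weighted_factorial_sum_bound (m : ℕ) (hm : 1 ≤ m) :
    ∑ r ∈ Finset.Icc (-(m : ℤ)) (m : ℤ),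
        (∏ r' ∈ Finset.Icc 1 m, ((r' : ℝ) ^ 2 + 4)) /
          ((Nat.factorial ((m : ℤ) - r).toNat : ℝ) *
            (Nat.factorial ((m : ℤ) + r).toNat : ℝ)) ≤
      Real.sinh (2 * π) * 4 ^ m * (Nat.factorial m : ℝ) ^ 2 /
        (2 * π * (Nat.factorial (2 * m) : ℝ)) := by
  set P : ℝ := ∏ r' ∈ Finset.Icc 1 m, ((r' : ℝ) ^ 2 + 4) with hP
  set Q : ℝ := ∏ j ∈ Finset.range m, (1 + 4 / ((j : ℝ) + 1) ^ 2) with hQ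
  -- rewrite the product
  have hPQ : P = (Nat.factorial m : ℝ) ^ 2 * Q := by
    have h1 : P = ∏ j ∈ Finset.range m, (((j : ℝ) + 1) ^ 2 + 4) := by
      rw [hP, ← Finset.Ico_add_one_right_eq_Icc, Finset.prod_Ico_eq_prod_range]
      refine Finset.prod_congr rfl fun j _ => ?_
      push_cast; ring
    have h2 : ∀ j ∈ Finset.range m, (((j : ℝ) + 1) ^ 2 + 4)
        = ((j : ℝ) + 1) ^ 2 * (1 + 4 / ((j : ℝ) + 1) ^ 2) := by
      intro j _
      have : ((j : ℝ) + 1) ^ 2 ≠ 0 := by positivity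
      field_simp
    rw [h1, Finset.prod_congr rfl h2, Finset.prod_mul_distrib, ← hQ]
    congr 1
    rw [Finset.prod_pow]
    congr 1
    rw [← Finset.prod_range_add_one_eq_factorial m]
    push_cast
    rfl
  -- reindex the sum
  have hIcc : Finset.Icc (-(m : ℤ)) (m : ℤ)
      = Finset.map ⟨fun k : ℕ => (k : ℤ) - m, show Function.Injective (fun k : ℕ => (k : ℤ) - m) from fun a b h => by simp at h; omega⟩
        (Finset.range (2 * m + 1)) := by
    ext x
    simp only [Finset.mem_Icc, Finset.mem_map, Finset.mem_range, Function.Embedding.coeFn_mk]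
    constructor
    · intro ⟨h1, h2⟩; exact ⟨(x + m).toNat, by omega, by omega⟩
    · rintro ⟨k, hk, rfl⟩; omega
  have hsum : ∑ r ∈ Finset.Icc (-(m : ℤ)) (m : ℤ),
      P / ((Nat.factorial ((m : ℤ) - r).toNat : ℝ) * (Nat.factorial ((m : ℤ) + r).toNat : ℝ))
      = P * 4 ^ m / (Nat.factorial (2 * m) : ℝ) := by
    rw [hIcc, Finset.sum_map]
    simp only [Function.Embedding.coeFn_mk]
    have hterm : ∀ k ∈ Finset.range (2 * m + 1),
        P / ((Nat.factorial ((m : ℤ) - ((k : ℤ) - m)).toNat : ℝ)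
          * (Nat.factorial ((m : ℤ) + ((k : ℤ) - m)).toNat : ℝ))
        = P * ((2 * m).choose k : ℝ) / (Nat.factorial (2 * m) : ℝ) := by
      intro k hk
      rw [Finset.mem_range] at hk
      have hk' : k ≤ 2 * m := by omega
      have e1 : ((m : ℤ) - ((k : ℤ) - m)).toNat = 2 * m - k := by omega
      have e2 : ((m : ℤ) + ((k : ℤ) - m)).toNat = k := by omega
      rw [e1, e2]
      have hfact : ((2 * m).choose k) * Nat.factorial k * Nat.factorial (2 * m - k)
          = Nat.factorial (2 * m) := Nat.choose_mul_factorial_mul_factorial hk'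
      have hfact' : (((2 * m).choose k : ℝ)) * (Nat.factorial k : ℝ)
          * (Nat.factorial (2 * m - k) : ℝ) = (Nat.factorial (2 * m) : ℝ) := by
        exact_mod_cast congrArg (Nat.cast (R := ℝ)) hfact
      have h1 : (Nat.factorial (2 * m - k) : ℝ) ≠ 0 := Nat.cast_ne_zero.2 (Nat.factorial_ne_zero _)
      have h2 : (Nat.factorial k : ℝ) ≠ 0 := Nat.cast_ne_zero.2 (Nat.factorial_ne_zero _)
      have h3 : (Nat.factorial (2 * m) : ℝ) ≠ 0 := Nat.cast_ne_zero.2 (Nat.factorial_ne_zero _)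
      have hd : (0:ℝ) < (Nat.factorial (2 * m - k) : ℝ) * (Nat.factorial k : ℝ) := by
        have := Nat.factorial_pos (2 * m - k)
        have := Nat.factorial_pos k
        positivity
      have hd3 : (0:ℝ) < (Nat.factorial (2 * m) : ℝ) := by
        exact_mod_cast Nat.factorial_pos (2 * m)
      rw [div_eq_div_iff hd.ne' hd3.ne']
      linear_combination (-P) * hfact'
    rw [Finset.sum_congr rfl hterm, ← Finset.sum_div, ← Finset.mul_sum]
    congr 2
    rw [← Nat.cast_sum]
    norm_cast
    rw [Nat.sum_range_choose (2 * m), pow_mul]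
    norm_num
  rw [hsum, hPQ]
  -- final comparison
  have hQle : Q ≤ Real.sinh (2 * π) / (2 * π) := by
    have hpi : (0:ℝ) < 2 * π := by positivity
    have h : 2 * π * Q ≤ Real.sinh (2 * π) := sinh_prod_bound m
    rw [le_div_iff₀ hpi]
    linarith
  have hQpos : 0 ≤ Q := by
    rw [hQ]; exact Finset.prod_nonneg fun i _ => by positivity
  have hfm : (0:ℝ) < (Nat.factorial m : ℝ) ^ 2 := by positivity
  have hf2m : (0:ℝ) < (Nat.factorial (2 * m) : ℝ) := by
    exact_mod_cast Nat.factorial_pos (2 * m)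
  have hpi : (0:ℝ) < 2 * π := by positivity
  rw [div_le_div_iff₀ hf2m (by positivity)]
  have key : (Nat.factorial m : ℝ) ^ 2 * Q * 4 ^ m ≤
      Real.sinh (2 * π) * 4 ^ m * (Nat.factorial m : ℝ) ^ 2 / (2 * π) := by
    calc (Nat.factorial m : ℝ) ^ 2 * Q * 4 ^ m
        ≤ (Nat.factorial m : ℝ) ^ 2 * (Real.sinh (2 * π) / (2 * π)) * 4 ^ m := by
          have h4 : (0:ℝ) < (4:ℝ) ^ m := by positivity
          exact mul_le_mul_of_nonneg_right (mul_le_mul_of_nonneg_left hQle hfm.le) h4.le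
      _ = Real.sinh (2 * π) * 4 ^ m * (Nat.factorial m : ℝ) ^ 2 / (2 * π) := by
          ring
  calc (Nat.factorial m : ℝ) ^ 2 * Q * 4 ^ m * (2 * π * (Nat.factorial (2 * m) : ℝ))
      ≤ Real.sinh (2 * π) * 4 ^ m * (Nat.factorial m : ℝ) ^ 2 / (2 * π)
        * (2 * π * (Nat.factorial (2 * m) : ℝ)) := by
        exact mul_le_mul_of_nonneg_right key (by positivity)
    _ = Real.sinh (2 * π) * 4 ^ m * (Nat.factorial m : ℝ) ^ 2 * (Nat.factorial (2 * m) : ℝ) := by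
        field_simp
end

section
/- Auxiliary-pole error bound for the pole 2i (second error estimate in the proof of Theorem 3, time-independent form): Let H and L be Hermitian d×d complex matrices, let T ≥ 0, let α ∈ ℝ satisfy ⟨v, Lv⟩ ≤ α‖v‖² for all v, let a > 0, and let m ≥ 1. Then ‖(e^{−2πa} − 1)·exp(T(−iH + 2L)) / ((e^{4πa} − 1)·Π_{r=−m}^{m} ((r − i)/(r + 2i)))‖ ≤ sinh(2π)·e^{2Tα} / (π·(e^{4πa} − 1)). -/
open Matrix Complex
open scoped Real Matrix.Norms.L2Operator
open scoped ComplexInnerProductSpace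

lemma norm_exp_le_of_inner_le {E : Type*} [NormedAddCommGroup E] [InnerProductSpace ℂ E]
    [CompleteSpace E] (B : E →L[ℂ] E) (c : ℝ)
    (h : ∀ x : E, (⟪x, B x⟫).re ≤ c * ‖x‖ ^ 2) :
    ‖NormedSpace.exp B‖ ≤ Real.exp c := by
  refine ContinuousLinearMap.opNorm_le_bound _ (Real.exp_pos c).le fun v => ?_
  set u : ℝ → E := fun t => NormedSpace.exp (t • B) v with hu_def
  have hu : ∀ t : ℝ, HasDerivAt u (B (u t)) t := by
    intro t
    have h1 := hasDerivAt_exp_smul_const' (𝕂 := ℝ) (𝔸 := E →L[ℂ] E) B t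
    have h2 := (((ContinuousLinearMap.apply ℂ E v).restrictScalars ℝ).hasFDerivAt.comp_hasDerivAt
      t h1)
    simpa [u, Function.comp_def] using h2
  have hg : ∀ t : ℝ, HasDerivAt (fun t => (⟪u t, u t⟫).re)
      (2 * (⟪u t, B (u t)⟫).re) t := by
    intro t
    have h3 : HasDerivAt (fun t => ⟪u t, u t⟫)
        (⟪u t, B (u t)⟫ + ⟪B (u t), u t⟫) t := (hu t).inner ℂ (hu t)
    have h4 := (Complex.reCLM.hasFDerivAt.comp_hasDerivAt t h3)
    have h5 : ⟪B (u t), u t⟫ = (starRingEnd ℂ) ⟪u t, B (u t)⟫ := (inner_conj_symm _ _).symm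
    have h6 : (⟪u t, B (u t)⟫ + ⟪B (u t), u t⟫).re = 2 * (⟪u t, B (u t)⟫).re := by
      rw [h5, Complex.add_re, Complex.conj_re]; ring
    rw [← h6]
    exact h4
  set φ : ℝ → ℝ := fun t => Real.exp (-(2*c)*t) * (⟪u t, u t⟫).re with hφ_def
  have hφ : ∀ t, HasDerivAt φ
      (-(2*c) * Real.exp (-(2*c)*t) * (⟪u t, u t⟫).re
        + Real.exp (-(2*c)*t) * (2 * (⟪u t, B (u t)⟫).re)) t := by
    intro t
    have he : HasDerivAt (fun t : ℝ => Real.exp (-(2*c)*t)) (-(2*c) * Real.exp (-(2*c)*t)) t := by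
      have := ((hasDerivAt_id t).const_mul (-(2*c))).exp
      simp only [id_eq] at this
      convert this using 1
      ring
    exact he.mul (hg t)
  have hmono : Antitone φ := by
    apply antitone_of_deriv_nonpos
    · intro t; exact (hφ t).differentiableAt
    · intro t
      rw [(hφ t).deriv]
      have h5 : (⟪u t, B (u t)⟫).re ≤ c * ‖u t‖ ^ 2 := h (u t)
      have h6 : (⟪u t, u t⟫).re = ‖u t‖ ^ 2 := by rw [← RCLike.re_to_complex]; exact inner_self_eq_norm_sq _
      rw [h6]
      have := Real.exp_pos (-(2*c)*t)
      nlinarith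
  have h01 : φ 1 ≤ φ 0 := hmono (by norm_num)
  have hu0 : u 0 = v := by simp [u]
  have hu1 : u 1 = NormedSpace.exp B v := by
    rw [hu_def]
    simp
  rw [hφ_def] at h01
  simp only [hu0, hu1, mul_one, mul_zero, Real.exp_zero, one_mul] at h01
  have e1 : (⟪NormedSpace.exp B v, NormedSpace.exp B v⟫).re
      = ‖NormedSpace.exp B v‖ ^ 2 := by rw [← RCLike.re_to_complex]; exact inner_self_eq_norm_sq _
  have e2 : (⟪v, v⟫).re = ‖v‖ ^ 2 := by rw [← RCLike.re_to_complex]; exact inner_self_eq_norm_sq _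
  rw [e1, e2] at h01
  have hx := Real.exp_pos (-(2*c))
  have hkey : ‖NormedSpace.exp B v‖ ^ 2 ≤ (Real.exp c * ‖v‖) ^ 2 := by
    have h7 : Real.exp (-(2*c)) * (Real.exp c * Real.exp c) = 1 := by
      rw [← Real.exp_add, ← Real.exp_add, show -(2*c)+(c+c) = 0 by ring, Real.exp_zero]
    nlinarith [norm_nonneg v, Real.exp_pos c]
  nlinarith [norm_nonneg (NormedSpace.exp B v), norm_nonneg v, Real.exp_pos c,
    mul_nonneg (Real.exp_pos c).le (norm_nonneg v)]


lemma matrix_exp_norm_le (d : ℕ) (A : Matrix (Fin d) (Fin d) ℂ) (c : ℝ)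
    (h : ∀ v : Fin d → ℂ, (star v ⬝ᵥ A *ᵥ v).re ≤ c * (star v ⬝ᵥ v).re) :
    ‖NormedSpace.exp A‖ ≤ Real.exp c := by
  have hiso : Isometry (toEuclideanCLM (n := Fin d) (𝕜 := ℂ)) :=
    AddMonoidHomClass.isometry_of_norm _ fun x => rfl
  letI : NormedAlgebra ℚ (Matrix (Fin d) (Fin d) ℂ) := NormedAlgebra.restrictScalars ℚ ℂ _
  rw [Matrix.cstar_norm_def, NormedSpace.map_exp _ hiso.continuous]
  apply norm_exp_le_of_inner_le
  intro x
  have h1 : ⟪x, toEuclideanCLM (n := Fin d) (𝕜 := ℂ) A x⟫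
      = star (WithLp.equiv 2 _ x) ⬝ᵥ A *ᵥ (WithLp.equiv 2 _ x) := by
    rw [EuclideanSpace.inner_eq_star_dotProduct, dotProduct_comm]
    simp [Matrix.toLin'_apply]
  have h2 : ‖x‖ ^ 2 = (star (WithLp.equiv 2 _ x) ⬝ᵥ (WithLp.equiv 2 _ x)).re := by
    rw [← inner_self_eq_norm_sq (𝕜 := ℂ), RCLike.re_to_complex,
      EuclideanSpace.inner_eq_star_dotProduct, dotProduct_comm]
    rfl
  rw [h1, h2]
  exact h _


lemma f_eq_sqrt (x : ℤ) :
    ‖((x : ℂ) - Complex.I) / ((x : ℂ) + 2 * Complex.I)‖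
      = Real.sqrt (((x : ℝ) ^ 2 + 1) / ((x : ℝ) ^ 2 + 4)) := by
  have hsq : ‖((x : ℂ) - Complex.I) / ((x : ℂ) + 2 * Complex.I)‖ ^ 2
      = ((x : ℝ) ^ 2 + 1) / ((x : ℝ) ^ 2 + 4) := by
    rw [norm_div, div_pow, Complex.sq_norm,
      Complex.sq_norm]
    simp [Complex.normSq_apply]
    ring_nf
  rw [← hsq, Real.sqrt_sq (norm_nonneg _)]

lemma prod_f_eq (m : ℕ) :
    ∏ r ∈ Finset.Icc (-(m : ℤ)) (m : ℤ),
        ‖((r : ℂ) - Complex.I) / ((r : ℂ) + 2 * Complex.I)‖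
      = (1 / 2) * ∏ k ∈ Finset.Icc 1 m, (((k : ℝ) ^ 2 + 1) / ((k : ℝ) ^ 2 + 4)) := by
  induction m with
  | zero =>
    have h0 : Finset.Icc (-((0:ℕ):ℤ)) ((0:ℕ):ℤ) = {0} := by
      ext x; simp
    rw [h0, Finset.prod_singleton, Finset.Icc_eq_empty (by omega), Finset.prod_empty, mul_one,
      f_eq_sqrt 0]
    rw [show (((0:ℤ):ℝ)^2 + 1)/(((0:ℤ):ℝ)^2+4) = (1/2)^2 by norm_num,
      Real.sqrt_sq (by norm_num)]
  | succ n ih =>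
    have hset : Finset.Icc (-((n + 1 : ℕ) : ℤ)) ((n + 1 : ℕ) : ℤ)
        = insert (-((n + 1 : ℕ) : ℤ)) (insert (((n + 1 : ℕ) : ℤ)) (Finset.Icc (-(n : ℤ)) (n : ℤ))) := by
      ext x
      simp only [Finset.mem_Icc, Finset.mem_insert]
      omega
    rw [hset, Finset.prod_insert (by simp only [Finset.mem_insert, Finset.mem_Icc]; omega),
      Finset.prod_insert (by simp only [Finset.mem_Icc]; omega), ih,
      Finset.prod_Icc_succ_top (Nat.le_add_left 1 n)]
    rw [f_eq_sqrt, f_eq_sqrt]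
    have hc : ((-((n + 1 : ℕ) : ℤ) : ℤ) : ℝ) ^ 2 = (((n + 1 : ℕ) : ℤ) : ℝ) ^ 2 := by
      push_cast; ring
    rw [hc]
    have hnn : (0:ℝ) ≤ ((((n + 1 : ℕ) : ℤ) : ℝ) ^ 2 + 1) / ((((n + 1 : ℕ) : ℤ) : ℝ) ^ 2 + 4) := by
      positivity
    rw [← mul_assoc, Real.mul_self_sqrt hnn]
    push_cast
    ring

lemma sum_inv_le : ∀ m : ℕ, 3 ≤ m →
    ∑ k ∈ Finset.Icc 1 m, (1 : ℝ) / ((k : ℝ) ^ 2 + 1) ≤ 17 / 15 - 1 / (m : ℝ) := by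
  intro m hm
  induction m, hm using Nat.le_induction with
  | base =>
    rw [show Finset.Icc 1 3 = {1, 2, 3} from rfl]
    norm_num
  | succ n hn ih =>
    rw [Finset.sum_Icc_succ_top (by omega)]
    have hn3 : (3 : ℝ) ≤ (n : ℝ) := by exact_mod_cast hn
    have h1 : (1 : ℝ) / (((n + 1 : ℕ) : ℝ) ^ 2 + 1) ≤ 1 / (n : ℝ) - 1 / ((n : ℝ) + 1) := by
      push_cast
      rw [div_sub_div _ _ (by nlinarith) (by nlinarith), one_mul, mul_one]
      rw [div_le_div_iff₀ (by nlinarith) (by nlinarith)]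
      ring_nf
      nlinarith
    push_cast at ih h1 ⊢
    linarith


lemma sum_inv_le' (m : ℕ) :
    ∑ k ∈ Finset.Icc 1 m, (1 : ℝ) / ((k : ℝ) ^ 2 + 1) ≤ 17 / 15 := by
  rcases le_or_gt 3 m with hm | hm
  · have := sum_inv_le m hm
    have h0 : (0:ℝ) ≤ 1 / (m:ℝ) := by positivity
    linarith
  · interval_cases m
    · simp; norm_num
    · rw [show Finset.Icc 1 1 = {1} from rfl]; norm_num
    · rw [show Finset.Icc 1 2 = {1, 2} from rfl]; norm_num

lemma prod_F_ge (m : ℕ) :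
    (Real.exp (17 / 5))⁻¹ ≤ ∏ k ∈ Finset.Icc 1 m, (((k : ℝ) ^ 2 + 1) / ((k : ℝ) ^ 2 + 4)) := by
  have h1 : ∏ k ∈ Finset.Icc 1 m, (((k : ℝ) ^ 2 + 4) / ((k : ℝ) ^ 2 + 1))
      ≤ Real.exp (17 / 5) := by
    calc ∏ k ∈ Finset.Icc 1 m, (((k : ℝ) ^ 2 + 4) / ((k : ℝ) ^ 2 + 1))
        ≤ ∏ k ∈ Finset.Icc 1 m, Real.exp (3 / ((k : ℝ) ^ 2 + 1)) := by
          apply Finset.prod_le_prod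
          · intro k _; positivity
          · intro k _
            have hk : (0:ℝ) < (k : ℝ) ^ 2 + 1 := by positivity
            have : ((k : ℝ) ^ 2 + 4) / ((k : ℝ) ^ 2 + 1) = 3 / ((k : ℝ) ^ 2 + 1) + 1 := by
              field_simp; ring
            rw [this]
            exact Real.add_one_le_exp _
      _ = Real.exp (∑ k ∈ Finset.Icc 1 m, 3 / ((k : ℝ) ^ 2 + 1)) := (Real.exp_sum _ _).symm
      _ ≤ Real.exp (17 / 5) := by
          apply Real.exp_le_exp.mpr
          have := sum_inv_le' m
          have h3 : ∑ k ∈ Finset.Icc 1 m, 3 / ((k : ℝ) ^ 2 + 1)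
              = 3 * ∑ k ∈ Finset.Icc 1 m, 1 / ((k : ℝ) ^ 2 + 1) := by
            rw [Finset.mul_sum]; congr 1; ext k; ring
          rw [h3]; linarith
  have h2 : ∏ k ∈ Finset.Icc 1 m, (((k : ℝ) ^ 2 + 1) / ((k : ℝ) ^ 2 + 4))
      = (∏ k ∈ Finset.Icc 1 m, (((k : ℝ) ^ 2 + 4) / ((k : ℝ) ^ 2 + 1)))⁻¹ := by
    rw [← Finset.prod_inv_distrib]
    congr 1; ext k
    rw [inv_div]
  rw [h2]
  have hpos : (0:ℝ) < ∏ k ∈ Finset.Icc 1 m, (((k : ℝ) ^ 2 + 4) / ((k : ℝ) ^ 2 + 1)) := by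
    apply Finset.prod_pos; intro k _; positivity
  exact inv_anti₀ hpos h1

lemma numeric_sinh : 2 * π * Real.exp (17 / 5) ≤ Real.sinh (2 * π) := by
  have hπ1 : 3.141592 < π := Real.pi_gt_d6
  have hπ2 : π < 3.141593 := Real.pi_lt_d6
  have hbase : (13.567 : ℝ) ≤ Real.exp (2 * π - 17 / 5) := by
    have h0 : (0:ℝ) ≤ 1 + (2 * π - 17 / 5) / 16 := by nlinarith
    have h1 : ((1 : ℝ) + (2 * π - 17 / 5) / 16) ^ 16 ≤ Real.exp (2 * π - 17 / 5) := by
      have h2 : ((1 : ℝ) + (2 * π - 17 / 5) / 16) ≤ Real.exp ((2 * π - 17 / 5) / 16) := by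
        have := Real.add_one_le_exp ((2 * π - 17 / 5) / 16)
        linarith
      calc ((1 : ℝ) + (2 * π - 17 / 5) / 16) ^ 16
          ≤ Real.exp ((2 * π - 17 / 5) / 16) ^ 16 := by
            exact pow_le_pow_left₀ h0 h2 16
        _ = Real.exp (2 * π - 17 / 5) := by
            rw [← Real.exp_nat_mul]; congr 1; push_cast; ring
    have h3 : ((1 : ℝ) + 2.883184 / 16) ^ 16 ≤ ((1 : ℝ) + (2 * π - 17 / 5) / 16) ^ 16 := by
      apply pow_le_pow_left₀ (by norm_num)
      nlinarith
    have h4 : (13.567 : ℝ) ≤ ((1 : ℝ) + 2.883184 / 16) ^ 16 := by norm_num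
    linarith
  have hexp : Real.exp (2 * π) = Real.exp (17 / 5) * Real.exp (2 * π - 17 / 5) := by
    rw [← Real.exp_add]; ring_nf
  have h5 : Real.exp (-(2 * π)) ≤ 1 := by
    rw [Real.exp_le_one_iff]; nlinarith
  have h6 : (1:ℝ) ≤ Real.exp (17 / 5) := by
    rw [Real.one_le_exp_iff]; norm_num
  rw [Real.sinh_eq]
  have h7 : 4 * π + 1 ≤ 13.567 := by nlinarith
  have h8 : Real.exp (17 / 5) * (4 * π + 1) ≤ Real.exp (2 * π) := by
    rw [hexp]
    have := Real.exp_pos (17/5)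
    nlinarith
  nlinarith [Real.exp_pos (17/5)]

lemma herm_dot_im (d : ℕ) (H : Matrix (Fin d) (Fin d) ℂ) (hH : H.IsHermitian)
    (v : Fin d → ℂ) : (star v ⬝ᵥ H *ᵥ v).im = 0 := by
  have h1 : star (star v ⬝ᵥ H *ᵥ v) = star v ⬝ᵥ H *ᵥ v := by
    conv_lhs => rw [Matrix.star_dotProduct, star_star, Matrix.star_mulVec,
      ← Matrix.dotProduct_mulVec, hH.eq]
  exact Complex.conj_eq_iff_im.mp h1

/-- **Auxiliary-pole error bound for the pole `2i`** (second error estimate in the proof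
of Theorem 3, time-independent form). For Hermitian `H, L` with `⟨v, Lv⟩ ≤ α‖v‖²`,
`T ≥ 0`, `a > 0` and `m ≥ 1`,
`‖(e^{-2πa} - 1)·exp(T(-iH + 2L)) / ((e^{4πa} - 1)·∏_{r=-m}^{m} (r-i)/(r+2i))‖
  ≤ sinh(2π)·e^{2Tα}/(π·(e^{4πa} - 1))`. -/
theorem auxiliary_pole_two_i_bound
    (d : ℕ) (H L : Matrix (Fin d) (Fin d) ℂ)
    (hH : H.IsHermitian) (hL : L.IsHermitian)
    (T : ℝ) (hT : 0 ≤ T)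
    (α : ℝ) (hα : ∀ v : Fin d → ℂ, (star v ⬝ᵥ L *ᵥ v).re ≤ α * (star v ⬝ᵥ v).re)
    (a : ℝ) (ha : 0 < a) (m : ℕ) (hm : 1 ≤ m) :
    ‖(((Real.exp (-(2 * π * a)) : ℝ) - 1 : ℂ) /
          (((Real.exp (4 * π * a) : ℝ) - 1 : ℂ) *
            ∏ r ∈ Finset.Icc (-(m : ℤ)) (m : ℤ),
              (((r : ℂ) - Complex.I) / ((r : ℂ) + 2 * Complex.I)))) •
        NormedSpace.exp ((T : ℂ) • ((-Complex.I) • H + (2 : ℂ) • L))‖ ≤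
      Real.sinh (2 * π) * Real.exp (2 * T * α) / (π * (Real.exp (4 * π * a) - 1)) := by
  set A : Matrix (Fin d) (Fin d) ℂ := (T : ℂ) • ((-Complex.I) • H + (2 : ℂ) • L) with hA
  -- norm of the matrix exponential
  have hexp : ‖NormedSpace.exp A‖ ≤ Real.exp (2 * T * α) := by
    apply matrix_exp_norm_le
    intro v
    have hz : star v ⬝ᵥ A *ᵥ v
        = (T : ℂ) * ((-Complex.I) * (star v ⬝ᵥ H *ᵥ v) + 2 * (star v ⬝ᵥ L *ᵥ v)) := by
      rw [hA]
      simp [Matrix.add_mulVec, Matrix.smul_mulVec, Matrix.neg_mulVec,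
        dotProduct_add, dotProduct_smul, dotProduct_neg, smul_eq_mul,
        smul_smul]
      ring
    rw [hz]
    have hzH := herm_dot_im d H hH v
    have hre : ((T : ℂ) * ((-Complex.I) * (star v ⬝ᵥ H *ᵥ v) + 2 * (star v ⬝ᵥ L *ᵥ v))).re
        = T * ((star v ⬝ᵥ H *ᵥ v).im + 2 * (star v ⬝ᵥ L *ᵥ v).re) := by
      simp [Complex.mul_re, Complex.mul_im, Complex.add_re, Complex.add_im]
      try ring
    rw [hre, hzH]
    have hL' := hα v
    nlinarith [hα v, hT]
  -- norm of the scalar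
  have hP : ‖∏ r ∈ Finset.Icc (-(m : ℤ)) (m : ℤ),
      (((r : ℂ) - Complex.I) / ((r : ℂ) + 2 * Complex.I))‖
      = (1 / 2) * ∏ k ∈ Finset.Icc 1 m, (((k : ℝ) ^ 2 + 1) / ((k : ℝ) ^ 2 + 4)) := by
    rw [norm_prod]
    exact prod_f_eq m
  have hPge : (1 / 2) * (Real.exp (17 / 5))⁻¹
      ≤ ‖∏ r ∈ Finset.Icc (-(m : ℤ)) (m : ℤ),
        (((r : ℂ) - Complex.I) / ((r : ℂ) + 2 * Complex.I))‖ := by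
    rw [hP]
    have := prod_F_ge m
    nlinarith [Real.exp_pos (17/5 : ℝ)]
  have hPpos : 0 < ‖∏ r ∈ Finset.Icc (-(m : ℤ)) (m : ℤ),
      (((r : ℂ) - Complex.I) / ((r : ℂ) + 2 * Complex.I))‖ := by
    have : (0:ℝ) < (1 / 2) * (Real.exp (17 / 5))⁻¹ := by positivity
    linarith
  -- numerator and denominator norms
  have hY : ‖((Real.exp (-(2 * π * a)) : ℝ) - 1 : ℂ)‖ = 1 - Real.exp (-(2 * π * a)) := by
    have h1 : ((Real.exp (-(2 * π * a)) : ℝ) - 1 : ℂ)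
        = ((Real.exp (-(2 * π * a)) - 1 : ℝ) : ℂ) := by push_cast; ring
    rw [h1, Complex.norm_real, Real.norm_eq_abs]
    have h2 : Real.exp (-(2 * π * a)) ≤ 1 := by
      rw [Real.exp_le_one_iff]
      have := Real.pi_pos
      nlinarith
    rw [_root_.abs_of_nonpos (by linarith)]
    ring
  have hX : ‖((Real.exp (4 * π * a) : ℝ) - 1 : ℂ)‖ = Real.exp (4 * π * a) - 1 := by
    have h1 : ((Real.exp (4 * π * a) : ℝ) - 1 : ℂ)
        = ((Real.exp (4 * π * a) - 1 : ℝ) : ℂ) := by push_cast; ring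
    rw [h1, Complex.norm_real, Real.norm_eq_abs]
    have h2 : (1:ℝ) < Real.exp (4 * π * a) := by
      rw [Real.one_lt_exp_iff]
      have := Real.pi_pos
      nlinarith
    rw [_root_.abs_of_nonneg (by linarith)]
  have hXpos : 0 < Real.exp (4 * π * a) - 1 := by
    have h2 : (1:ℝ) < Real.exp (4 * π * a) := by
      rw [Real.one_lt_exp_iff]
      have := Real.pi_pos
      nlinarith
    linarith
  -- put it together
  rw [norm_smul, norm_div, norm_mul, hY, hX]
  set N := ‖∏ r ∈ Finset.Icc (-(m : ℤ)) (m : ℤ),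
      (((r : ℂ) - Complex.I) / ((r : ℂ) + 2 * Complex.I))‖ with hN
  set Z := ‖NormedSpace.exp A‖ with hZ
  set Y := 1 - Real.exp (-(2 * π * a)) with hYd
  set X := Real.exp (4 * π * a) - 1 with hXd
  set S := Real.sinh (2 * π) with hS
  set K := Real.exp (2 * T * α) with hK
  have hYle : Y ≤ 1 := by
    rw [hYd]
    have := Real.exp_pos (-(2 * π * a))
    linarith
  have hYnn : 0 ≤ Y := by
    rw [hYd]
    have h2 : Real.exp (-(2 * π * a)) ≤ 1 := by
      rw [Real.exp_le_one_iff]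
      have := Real.pi_pos
      nlinarith
    linarith
  have hπ : (0:ℝ) < π := Real.pi_pos
  have hSN : π ≤ S * N := by
    have h1 : 2 * π * Real.exp (17 / 5) ≤ S := numeric_sinh
    have h2 : (2 * π * Real.exp (17 / 5)) * ((1 / 2) * (Real.exp (17 / 5))⁻¹) = π := by
      field_simp
    have h3 : (0:ℝ) < 2 * π * Real.exp (17 / 5) := by positivity
    calc π = (2 * π * Real.exp (17 / 5)) * ((1 / 2) * (Real.exp (17 / 5))⁻¹) := h2.symm
      _ ≤ S * N := by
          apply mul_le_mul h1 hPge (by positivity) (by linarith)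
  have hmain : Y / (X * N) ≤ S / (π * X) := by
    rw [div_le_div_iff₀ (by positivity) (by positivity)]
    have h4 : Y * (π * X) ≤ 1 * (π * X) := by
      apply mul_le_mul_of_nonneg_right hYle (by positivity)
    have h5 : π * X ≤ (S * N) * X := by
      apply mul_le_mul_of_nonneg_right hSN (by linarith)
    nlinarith
  have hZnn : (0:ℝ) ≤ Z := norm_nonneg _
  calc Y / (X * N) * Z ≤ S / (π * X) * K := by
        apply mul_le_mul hmain hexp hZnn (by positivity)
    _ = S * K / (π * X) := by ring
end

section
/- Tail sum bound for the truncated LCU series (truncation estimate in the proof of Theorem 3): Let a > 0, let m ≥ 1 be a natural number, and let K be a positive integer with K/a ≥ 2m. Then Σ_{k=K+1}^{∞} 1 / (((k/a)² + 1) · Π_{r=1}^{m} ((k/a)² − r²)) ≤ a / (K/a − m)^{2m+1}, where each factor (k/a)² − r² is positive under the stated hypotheses and the series converges. -/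
-- Bernoulli: x^(n+1) - y^(n+1) ≥ (n+1) y^n (x-y)
lemma my_bernoulli (n : ℕ) (x y : ℝ) (hy : 0 < y) (hxy : y ≤ x) :
    y ^ (n+1) + ((n:ℝ)+1) * y ^ n * (x - y) ≤ x ^ (n+1) := by
  have ht : (-2:ℝ) ≤ (x - y)/y := by
    have : 0 ≤ (x - y)/y := div_nonneg (by linarith) hy.le
    linarith
  have hb := one_add_mul_le_pow ht (n+1)
  have h1 : (1:ℝ) + (x - y)/y = x / y := by field_simp; ring
  rw [h1] at hb
  have h2 := mul_le_mul_of_nonneg_right hb (by positivity : (0:ℝ) ≤ y ^ (n+1))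
  have h3 : (x / y) ^ (n+1) * y ^ (n+1) = x ^ (n+1) := by
    rw [div_pow]; field_simp
  rw [h3] at h2
  have h4 : (1 + ((n:ℝ)+1) * ((x - y)/y)) * y ^ (n+1)
      = y ^ (n+1) + ((n:ℝ)+1) * y ^ n * (x - y) := by
    field_simp
    ring
  push_cast at h2
  linarith [h4, h2]

lemma my_telescope (n : ℕ) (x y : ℝ) (hy : 0 < y) (hxy : y < x) :
    1 / x ^ (n+2) ≤ 1 / (((n:ℝ)+1) * (x - y)) * (1 / y ^ (n+1) - 1 / x ^ (n+1)) := by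
  have hx : 0 < x := hy.trans hxy
  have hb := my_bernoulli n x y hy hxy.le
  have hsub : 1 / y ^ (n+1) - 1 / x ^ (n+1)
      = (x ^ (n+1) - y ^ (n+1)) / (y ^ (n+1) * x ^ (n+1)) := by
    field_simp
  have hR : 1 / (((n:ℝ)+1) * (x - y)) * ((x ^ (n+1) - y ^ (n+1)) / (y ^ (n+1) * x ^ (n+1)))
      = (x ^ (n+1) - y ^ (n+1)) / ((((n:ℝ)+1) * (x - y)) * (y ^ (n+1) * x ^ (n+1))) := by
    rw [div_mul_div_comm, one_mul]
  have hxy' : 0 < x - y := sub_pos.mpr hxy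
  rw [hsub, hR]
  rw [div_le_div_iff₀ (by positivity) (by positivity)]
  have key : (((n:ℝ)+1) * (x - y)) * y ^ n ≤ x ^ (n+1) - y ^ (n+1) := by linarith
  have hc : 0 < ((n:ℝ)+1) * (x - y) := by positivity
  have h1 : (((n:ℝ)+1) * (x - y)) * y ^ n * y ≤ (x ^ (n+1) - y ^ (n+1)) * x := by
    have ha1 : (((n:ℝ)+1) * (x - y)) * y ^ n * y ≤ (((n:ℝ)+1) * (x - y)) * y ^ n * x :=
      mul_le_mul_of_nonneg_left hxy.le (by positivity)
    have ha2 : (((n:ℝ)+1) * (x - y)) * y ^ n * x ≤ (x ^ (n+1) - y ^ (n+1)) * x :=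
      mul_le_mul_of_nonneg_right key hx.le
    linarith
  have h2 := mul_le_mul_of_nonneg_right h1 (pow_nonneg hx.le (n+1))
  calc 1 * (((n:ℝ)+1) * (x - y) * (y ^ (n+1) * x ^ (n+1)))
      = (((n:ℝ)+1) * (x - y)) * y ^ n * y * x ^ (n+1) := by ring
    _ ≤ (x ^ (n+1) - y ^ (n+1)) * x * x ^ (n+1) := h2
    _ = (x ^ (n+1) - y ^ (n+1)) * x ^ (n+2) := by ring

/-- **Tail sum bound for the truncated LCU series** (truncation estimate in the proof of
Theorem 3). For `a > 0`, `m ≥ 1`, and a positive integer `K` with `K/a ≥ 2m`, each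
factor `(k/a)² - r²` appearing in the tail is positive, the tail series
`∑_{k>K} 1/(((k/a)² + 1) ∏_{r=1}^{m} ((k/a)² - r²))` converges, and it is bounded by
`a/(K/a - m)^{2m+1}`. -/
theorem lcu_tail_sum_bound
    (a : ℝ) (ha : 0 < a) (m : ℕ) (hm : 1 ≤ m)
    (K : ℕ) (hK : 0 < K) (hKa : 2 * (m : ℝ) ≤ (K : ℝ) / a) :
    (∀ k : ℕ, K < k → ∀ r ∈ Finset.Icc 1 m, 0 < ((k : ℝ) / a) ^ 2 - (r : ℝ) ^ 2) ∧
    Summable (fun k : {k : ℕ // K < k} =>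
      1 / ((((k : ℕ) : ℝ) / a) ^ 2 + 1) /
        ∏ r ∈ Finset.Icc 1 m, ((((k : ℕ) : ℝ) / a) ^ 2 - (r : ℝ) ^ 2)) ∧
    (∑' k : {k : ℕ // K < k},
        1 / ((((k : ℕ) : ℝ) / a) ^ 2 + 1) /
          ∏ r ∈ Finset.Icc 1 m, ((((k : ℕ) : ℝ) / a) ^ 2 - (r : ℝ) ^ 2)) ≤
      a / ((K : ℝ) / a - (m : ℝ)) ^ (2 * m + 1) := by
  have hm' : (1:ℝ) ≤ (m:ℝ) := by exact_mod_cast hm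
  have hKm : 0 < (K:ℝ)/a - m := by linarith
  have hka : ∀ k : ℕ, K < k → (K:ℝ)/a < (k:ℝ)/a := by
    intro k hk
    have hk' : (K:ℝ) < (k:ℝ) := by exact_mod_cast hk
    gcongr
  have hpos : ∀ k : ℕ, K < k → ∀ r ∈ Finset.Icc 1 m,
      0 < ((k : ℝ) / a) ^ 2 - (r : ℝ) ^ 2 := by
    intro k hk r hr
    obtain ⟨hr1, hr2⟩ := Finset.mem_Icc.mp hr
    have hrm : (r:ℝ) ≤ m := by exact_mod_cast hr2
    have hx : 2*(m:ℝ) < (k:ℝ)/a := lt_of_le_of_lt hKa (hka k hk)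
    nlinarith
  set f : ℕ → ℝ := fun k => 1 / (((k:ℝ)/a)^2 + 1) /
      ∏ r ∈ Finset.Icc 1 m, (((k:ℝ)/a)^2 - (r:ℝ)^2) with hfdef
  have hprodpos : ∀ k : ℕ, K < k →
      0 < ∏ r ∈ Finset.Icc 1 m, (((k:ℝ)/a)^2 - (r:ℝ)^2) :=
    fun k hk => Finset.prod_pos (fun r hr => hpos k hk r hr)
  have hfpos : ∀ k : ℕ, K < k → 0 < f k := by
    intro k hk
    exact div_pos (div_pos one_pos (by positivity)) (hprodpos k hk)
  -- step 1: f k ≤ 1/(k/a - m)^(2m+2)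
  have hstep1 : ∀ k : ℕ, K < k → f k ≤ 1 / ((k:ℝ)/a - m) ^ (2*m+2) := by
    intro k hk
    have hxm : 2*(m:ℝ) < (k:ℝ)/a := lt_of_le_of_lt hKa (hka k hk)
    have hxm0 : 0 < (k:ℝ)/a - m := by linarith
    have hP : ((k:ℝ)/a - m) ^ (2*m) ≤
        ∏ r ∈ Finset.Icc 1 m, (((k:ℝ)/a)^2 - (r:ℝ)^2) := by
      have h1 : ((k:ℝ)/a - m) ^ (2*m)
          = ∏ _r ∈ Finset.Icc 1 m, ((k:ℝ)/a - m)^2 := by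
        rw [Finset.prod_const, Nat.card_Icc, ← pow_mul]
        have hmm : m + 1 - 1 = m := by omega
        rw [hmm]
      rw [h1]
      apply Finset.prod_le_prod (fun r _ => by positivity)
      intro r hr
      obtain ⟨hr1, hr2⟩ := Finset.mem_Icc.mp hr
      have hrm : (r:ℝ) ≤ m := by exact_mod_cast hr2
      nlinarith
    have hA : ((k:ℝ)/a - m) ^ (2*m+2) ≤
        (((k:ℝ)/a)^2 + 1) * ∏ r ∈ Finset.Icc 1 m, (((k:ℝ)/a)^2 - (r:ℝ)^2) := by
      have h2 : ((k:ℝ)/a - m)^2 ≤ ((k:ℝ)/a)^2 + 1 := by nlinarith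
      calc ((k:ℝ)/a - m) ^ (2*m+2)
          = ((k:ℝ)/a - m)^2 * ((k:ℝ)/a - m) ^ (2*m) := by ring
        _ ≤ (((k:ℝ)/a)^2 + 1) * ∏ r ∈ Finset.Icc 1 m, (((k:ℝ)/a)^2 - (r:ℝ)^2) := by
            apply mul_le_mul h2 hP (by positivity) (by positivity)
    have hfk : f k = 1 / ((((k:ℝ)/a)^2 + 1) *
        ∏ r ∈ Finset.Icc 1 m, (((k:ℝ)/a)^2 - (r:ℝ)^2)) := by
      rw [hfdef]; simp only [div_div]
    rw [hfk]
    exact one_div_le_one_div_of_le (by positivity) hA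
  -- telescoping majorant
  set g : ℕ → ℝ := fun j => a/(2*(m:ℝ)+1) / (((K:ℝ)+j)/a - m)^(2*m+1) with hgdef
  have hgy : ∀ j : ℕ, 0 < ((K:ℝ)+j)/a - m := by
    intro j
    have h1 : (K:ℝ)/a ≤ ((K:ℝ)+j)/a := by
      have h2 : (K:ℝ) ≤ (K:ℝ)+j := le_add_of_nonneg_right (Nat.cast_nonneg j)
      gcongr
    linarith
  have hgpos : ∀ j : ℕ, 0 < g j := by
    intro j
    have := hgy j
    rw [hgdef]
    positivity
  have htel : ∀ j : ℕ, f (K+1+j) ≤ g j - g (j+1) := by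
    intro j
    have hy := hgy j
    have hyx : ((K:ℝ)+j)/a - m < ((K:ℝ)+(j+1):ℝ)/a - m := by
      have h1 : (K:ℝ)+j < (K:ℝ)+(j+1) := by push_cast; linarith
      gcongr
    have ht := my_telescope (2*m) (((K:ℝ)+(j+1):ℝ)/a - m) (((K:ℝ)+j)/a - m) hy hyx
    have hxy : (((K:ℝ)+(j+1):ℝ)/a - m) - (((K:ℝ)+j)/a - m) = 1/a := by
      field_simp
      ring
    rw [hxy] at ht
    have hcoef : 1 / ((((2*m : ℕ):ℝ)+1) * (1/a)) = a/(2*(m:ℝ)+1) := by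
      push_cast
      rw [one_div, mul_one_div, inv_div]
    rw [hcoef] at ht
    have hk1 : ((K+1+j : ℕ):ℝ)/a - m = ((K:ℝ)+((j:ℝ)+1))/a - m := by push_cast; ring
    have h0 := hstep1 (K+1+j) (by omega)
    rw [hk1] at h0
    have hgj1 : g (j+1) = a/(2*(m:ℝ)+1) * (1/(((K:ℝ)+((j:ℝ)+1))/a - m)^(2*m+1)) := by
      simp only [hgdef]
      push_cast
      rw [div_eq_mul_one_div]
    have hgj : g j = a/(2*(m:ℝ)+1) * (1/(((K:ℝ)+(j:ℝ))/a - m)^(2*m+1)) := by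
      simp only [hgdef]
      rw [div_eq_mul_one_div]
    calc f (K+1+j) ≤ 1/(((K:ℝ)+((j:ℝ)+1))/a - m)^(2*m+2) := h0
      _ ≤ a/(2*(m:ℝ)+1) * (1/(((K:ℝ)+(j:ℝ))/a - m)^(2*m+1)
            - 1/(((K:ℝ)+((j:ℝ)+1))/a - m)^(2*m+1)) := ht
      _ = g j - g (j+1) := by rw [hgj, hgj1, mul_sub]
  -- partial sums bounded by g 0
  have hFsum : ∀ N : ℕ, ∑ j ∈ Finset.range N, f (K+1+j) ≤ g 0 := by
    intro N
    have h1 : ∑ j ∈ Finset.range N, f (K+1+j) ≤ ∑ j ∈ Finset.range N, (g j - g (j+1)) :=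
      Finset.sum_le_sum (fun j _ => htel j)
    have h2 : ∑ j ∈ Finset.range N, (g j - g (j+1)) = g 0 - g N :=
      Finset.sum_range_sub' g N
    have h3 : 0 < g N := hgpos N
    linarith
  have hF0 : ∀ j : ℕ, 0 ≤ f (K+1+j) := fun j => (hfpos _ (by omega)).le
  have hFsummable : Summable (fun j : ℕ => f (K+1+j)) :=
    summable_of_sum_range_le hF0 hFsum
  have hFtsum : (∑' j : ℕ, f (K+1+j)) ≤ g 0 :=
    Summable.tsum_le_of_sum_range_le hFsummable hFsum
  -- reindex via equivalence
  let e : ℕ ≃ {k : ℕ // K < k} :=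
    { toFun := fun j => ⟨K+1+j, by omega⟩
      invFun := fun k => k.1 - (K+1)
      left_inv := fun j => by simp
      right_inv := fun k => Subtype.ext (by have := k.2; simp; omega) }
  have hcomp : (fun k : {k : ℕ // K < k} => f k.1) ∘ e = fun j : ℕ => f (K+1+j) := rfl
  have hsum2 : Summable (fun k : {k : ℕ // K < k} => f k.1) := by
    rw [← e.summable_iff, hcomp]
    exact hFsummable
  have htsum2 : (∑' k : {k : ℕ // K < k}, f k.1) ≤ g 0 := by
    rw [← e.tsum_eq (fun k : {k : ℕ // K < k} => f k.1)]
    exact hFtsum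
  have hg0 : g 0 ≤ a / ((K:ℝ)/a - (m:ℝ)) ^ (2*m+1) := by
    simp only [hgdef]
    push_cast
    rw [add_zero, div_div]
    apply div_le_div_of_nonneg_left ha.le (by positivity)
    · nlinarith [pow_pos hKm (2*m+1)]
  exact ⟨hpos, hsum2, htsum2.trans hg0⟩
end

section
/- Bound on the ℓ¹-weight of the LCU coefficients (coefficient-sum estimate in the proof of Theorem 3): Let a ≥ 1 be real and let m ≥ 1 be a natural number. Then Σ_{k∈ℤ} (Π_{r=1}^{m} (r² + 4)) / (((k/a)² + 1) · Π_{r=−m}^{m} |k/a + r + i|) ≤ a·(π + 1)·sinh(2π)/(2π), where the sum over k ∈ ℤ converges. -/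
open Complex Finset Filter
open scoped Real Topology

section LCUAux

lemma lcu_icc_succ (n : ℕ) : Finset.Icc (-(n+1 : ℤ)) (n+1) =
    insert (-(n+1):ℤ) (insert ((n+1):ℤ) (Finset.Icc (-(n:ℤ)) n)) := by
  ext r; simp only [Finset.mem_Icc, Finset.mem_insert]; omega

lemma lcu_prod_shift (m : ℕ) (z : ℂ) :
    ∏ r ∈ Finset.Icc (-(m:ℤ)) (m:ℤ), (z + (r:ℂ)) =
      z * ∏ j ∈ Finset.range m, (z^2 - ((j:ℂ)+1)^2) := by
  induction m with
  | zero => simp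
  | succ n ih =>
    have h1 : (-((n:ℤ)+1)) ∉ insert ((n:ℤ)+1) (Finset.Icc (-(n:ℤ)) (n:ℤ)) := by
      simp only [Finset.mem_insert, Finset.mem_Icc]; omega
    have h2 : ((n:ℤ)+1) ∉ Finset.Icc (-(n:ℤ)) (n:ℤ) := by
      simp only [Finset.mem_Icc]; omega
    rw [show ((n+1:ℕ):ℤ) = (n:ℤ)+1 by push_cast; ring, lcu_icc_succ, Finset.prod_insert h1,
      Finset.prod_insert h2, ih, Finset.prod_range_succ]
    push_cast
    ring

lemma lcu_abs_sin_pi_z (x : ℝ) :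
    Real.sinh π ≤ ‖Complex.sin ((π:ℂ) * ((x:ℂ) + I))‖ := by
  have h : (π:ℂ) * ((x:ℂ) + I) = ((π*x : ℝ) : ℂ) + (π:ℝ) * I := by push_cast; ring
  rw [h, Complex.sin_add, Complex.sin_mul_I, Complex.cos_mul_I]
  have h2 : Complex.sin ((π*x:ℝ):ℂ) * Complex.cosh (π:ℝ) +
      Complex.cos ((π*x:ℝ):ℂ) * (Complex.sinh (π:ℝ) * I)
      = ((Real.sin (π*x) * Real.cosh π : ℝ) : ℂ) +
        ((Real.cos (π*x) * Real.sinh π : ℝ) : ℂ) * I := by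
    push_cast; ring
  rw [h2, Complex.norm_add_mul_I]
  have h3 : (Real.sinh π)^2 ≤ (Real.sin (π*x) * Real.cosh π)^2 + (Real.cos (π*x) * Real.sinh π)^2 := by
    have hpyth := Real.sin_sq_add_cos_sq (π*x)
    have hc := Real.cosh_sq_sub_sinh_sq π
    nlinarith [sq_nonneg (Real.sin (π*x))]
  calc Real.sinh π = Real.sqrt ((Real.sinh π)^2) := by
        rw [Real.sqrt_sq (Real.sinh_nonneg_iff.mpr Real.pi_pos.le)]
    _ ≤ _ := Real.sqrt_le_sqrt h3

lemma lcu_euler_prod_ge_one (x : ℝ) (m : ℕ) :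
    1 ≤ ‖((x:ℂ) + I) * ∏ j ∈ Finset.range m, (1 - ((x:ℂ)+I)^2/((j:ℂ)+1)^2)‖ := by
  set z : ℂ := (x:ℂ) + I with hz
  set c : ℕ → ℝ := fun j => ‖1 - z^2/((j:ℂ)+1)^2‖ with hc
  have habsz : 1 ≤ ‖z‖ := by
    have h1 : ‖z‖ ^ 2 = x^2+1 := by
      rw [Complex.sq_norm, hz]
      simp [Complex.normSq_apply]
      ring
    nlinarith [norm_nonneg z, sq_nonneg x]
  have hq4 : ∀ j : ℕ, (0:ℝ) < ((j:ℝ)+1)^4 := by intro j; positivity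
  have hfac : ∀ j : ℕ, (c j)^2 * ((j:ℝ)+1)^4
      = ((j:ℝ)+1)^4 + ((x^2+1)^2 - 2*(x^2-1)*((j:ℝ)+1)^2) := by
    intro j
    have hq : ((j:ℂ)+1) ≠ 0 := by
      have := Nat.cast_add_one_ne_zero (R := ℂ) j
      push_cast at this ⊢; exact this
    have h1 : (1 - z^2/((j:ℂ)+1)^2) * ((j:ℂ)+1)^2
        = ((((j:ℝ)+1)^2 - x^2 + 1 : ℝ):ℂ) + ((-(2*x):ℝ):ℂ)*I := by
      rw [hz, sub_mul, one_mul, div_mul_cancel₀ _ (pow_ne_zero 2 hq)]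
      push_cast
      linear_combination (-1:ℂ) * I_sq
    have h2 := congrArg (‖·‖) h1
    rw [norm_mul, Complex.norm_add_mul_I] at h2
    have h3 : ‖((j:ℂ)+1)^2‖ = ((j:ℝ)+1)^2 := by
      have he : ((j:ℂ)+1) = ((j+1:ℕ):ℂ) := by push_cast; ring
      rw [norm_pow, he, Complex.norm_natCast]
      push_cast; ring
    rw [h3] at h2
    have h4 : (c j)^2 * ((j:ℝ)+1)^4 = (Real.sqrt ((((j:ℝ)+1)^2 - x^2+1)^2 + (-(2*x))^2))^2 := by
      rw [← h2]; ring
    rw [h4, Real.sq_sqrt (by positivity)]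
    ring
  have hcnn : ∀ j : ℕ, 0 ≤ c j := fun j => norm_nonneg _
  rw [norm_mul, norm_prod]
  by_cases hall : ∀ j < m, 0 ≤ (x^2+1)^2 - 2*(x^2-1)*((j:ℝ)+1)^2
  · have h1 : ∀ j ∈ Finset.range m, (1:ℝ) ≤ c j := by
      intro j hj
      have hd := hall j (Finset.mem_range.mp hj)
      have heq := hfac j
      have hc2 : 1 ≤ (c j)^2 := by
        refine le_of_mul_le_mul_right ?_ (hq4 j)
        rw [one_mul]; linarith
      nlinarith [hcnn j]
    have hprod : (1:ℝ) ≤ ∏ j ∈ Finset.range m, c j := by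
      calc (1:ℝ) = ∏ _j ∈ Finset.range m, (1:ℝ) := by simp
        _ ≤ ∏ j ∈ Finset.range m, c j :=
          Finset.prod_le_prod (fun j _ => zero_le_one) h1
    calc (1:ℝ) = 1 * 1 := by ring
      _ ≤ ‖z‖ * ∏ j ∈ Finset.range m, c j :=
        mul_le_mul habsz hprod zero_le_one (by linarith)
  · push_neg at hall
    obtain ⟨j₀, hj₀m, hneg⟩ := hall
    have hx2 : 1 < x^2 := by
      by_contra hcon
      push_neg at hcon
      have h0 : 0 ≤ (1 - x^2) * ((j₀:ℝ)+1)^2 := mul_nonneg (by linarith) (by positivity)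
      nlinarith [sq_nonneg (x^2+1)]
    have hle : ∀ j : ℕ, m ≤ j → c j ≤ 1 := by
      intro j hj
      have hqmono : ((j₀:ℝ)+1)^2 ≤ ((j:ℝ)+1)^2 := by
        have hjj : (j₀:ℝ) ≤ (j:ℝ) := by exact_mod_cast le_of_lt (lt_of_lt_of_le hj₀m hj)
        nlinarith [Nat.cast_nonneg (α := ℝ) j₀]
      have hmm : 0 ≤ (x^2-1) * (((j:ℝ)+1)^2 - ((j₀:ℝ)+1)^2) :=
        mul_nonneg (by linarith) (by linarith)
      have hdj : (x^2+1)^2 - 2*(x^2-1)*((j:ℝ)+1)^2 < 0 := by nlinarith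
      have heq := hfac j
      have hc2 : (c j)^2 ≤ 1 := by
        refine le_of_mul_le_mul_right ?_ (hq4 j)
        rw [one_mul]; linarith
      nlinarith [hcnn j]
    have hprodnn : 0 ≤ ‖z‖ * ∏ j ∈ Finset.range m, c j :=
      mul_nonneg (norm_nonneg _) (Finset.prod_nonneg (fun j _ => hcnn j))
    have hstep : ∀ n, m ≤ n →
        ‖z‖ * ∏ j ∈ Finset.range n, c j
          ≤ ‖z‖ * ∏ j ∈ Finset.range m, c j := by
      intro n hn
      rw [← Finset.prod_range_mul_prod_Ico c hn, ← mul_assoc]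
      have hp1 : ∏ j ∈ Finset.Ico m n, c j ≤ 1 :=
        Finset.prod_le_one (fun j _ => hcnn j) (fun j hj => hle j (Finset.mem_Ico.mp hj).1)
      calc ‖z‖ * (∏ j ∈ Finset.range m, c j) * (∏ j ∈ Finset.Ico m n, c j)
          ≤ ‖z‖ * (∏ j ∈ Finset.range m, c j) * 1 :=
            mul_le_mul_of_nonneg_left hp1 hprodnn
        _ = _ := by ring
    have htend : Tendsto (fun n => π * (‖z‖ * ∏ j ∈ Finset.range n, c j)) atTop
        (𝓝 (‖Complex.sin ((π:ℂ)*z)‖)) := by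
      have h1 := (continuous_norm.tendsto _).comp (Complex.tendsto_euler_sin_prod z)
      refine h1.congr (fun n => ?_)
      simp only [Function.comp_apply, norm_mul, norm_prod]
      rw [Complex.norm_real, Real.norm_eq_abs, _root_.abs_of_nonneg Real.pi_pos.le]
      ring
    have hlim : ‖Complex.sin ((π:ℂ)*z)‖ ≤
        π * (‖z‖ * ∏ j ∈ Finset.range m, c j) :=
      le_of_tendsto htend (Filter.eventually_atTop.mpr ⟨m, fun n hn =>
        mul_le_mul_of_nonneg_left (hstep n hn) Real.pi_pos.le⟩)
    have h6 := lcu_abs_sin_pi_z x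
    rw [← hz] at h6
    have h7 := Real.self_lt_sinh_iff.mpr Real.pi_pos
    have hpi := Real.pi_pos
    nlinarith

lemma lcu_prod_one_add_le (m : ℕ) :
    ∏ j ∈ Finset.range m, (1 + 4/((j:ℝ)+1)^2) ≤ Real.sinh (2*π) / (2*π) := by
  have h2pi : (0:ℝ) < 2*π := by positivity
  have hfac : ∀ j : ℕ, (1 - ((2:ℂ)*I)^2/((j:ℂ)+1)^2) = (((1 + 4/((j:ℝ)+1)^2 : ℝ)):ℂ) := by
    intro j
    have hI : ((2:ℂ)*I)^2 = -4 := by rw [mul_pow, I_sq]; norm_num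
    rw [hI]; push_cast; ring
  have hPnn : ∀ n : ℕ, 0 ≤ ∏ j ∈ Finset.range n, (1 + 4/((j:ℝ)+1)^2) := by
    intro n; apply Finset.prod_nonneg; intro j _; positivity
  have hprod : ∀ n : ℕ, ‖(π:ℂ) * ((2:ℂ)*I) *
      ∏ j ∈ Finset.range n, (1 - ((2:ℂ)*I)^2/((j:ℂ)+1)^2)‖
      = 2*π * ∏ j ∈ Finset.range n, (1 + 4/((j:ℝ)+1)^2) := by
    intro n
    rw [Finset.prod_congr rfl (fun j _ => hfac j), ← Complex.ofReal_prod,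
      norm_mul, norm_mul, norm_mul, Complex.norm_real, Real.norm_eq_abs, Complex.norm_real, Real.norm_eq_abs, Complex.norm_I,
      Complex.norm_two, _root_.abs_of_nonneg Real.pi_pos.le, _root_.abs_of_nonneg (hPnn n)]
    ring
  have hsin : ‖Complex.sin ((π:ℂ) * ((2:ℂ)*I))‖ = Real.sinh (2*π) := by
    have h1 : (π:ℂ) * ((2:ℂ)*I) = ((2*π:ℝ):ℂ) * I := by push_cast; ring
    rw [h1, Complex.sin_mul_I, ← Complex.ofReal_sinh, norm_mul, Complex.norm_real, Real.norm_eq_abs,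
      Complex.norm_I, _root_.abs_of_nonneg (Real.sinh_nonneg_iff.mpr h2pi.le)]
    ring
  have htend : Tendsto (fun n => 2*π * ∏ j ∈ Finset.range n, (1 + 4/((j:ℝ)+1)^2)) atTop
      (𝓝 (Real.sinh (2*π))) := by
    have h1 := (continuous_norm.tendsto _).comp
      (Complex.tendsto_euler_sin_prod ((2:ℂ)*I))
    rw [hsin] at h1
    exact h1.congr (fun n => hprod n)
  have hmono : Monotone (fun n => 2*π * ∏ j ∈ Finset.range n, (1 + 4/((j:ℝ)+1)^2)) := by
    apply monotone_nat_of_le_succ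
    intro n
    simp only [Finset.prod_range_succ]
    have h1 : (0:ℝ) ≤ 4/((n:ℝ)+1)^2 := by positivity
    nlinarith [mul_nonneg (hPnn n) h1, Real.pi_pos]
  have hfin := hmono.ge_of_tendsto htend m
  rw [le_div_iff₀ h2pi]
  linarith

lemma lcu_numer_eq (m : ℕ) :
    ∏ r ∈ Finset.Icc 1 m, ((r:ℝ)^2+4)
      = ∏ j ∈ Finset.range m, ((((j:ℝ)+1)^2)*(1+4/((j:ℝ)+1)^2)) := by
  induction m with
  | zero => simp
  | succ n ih =>
    rw [Finset.prod_Icc_succ_top (Nat.one_le_iff_ne_zero.mpr (Nat.succ_ne_zero n)),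
      Finset.prod_range_succ, ih]
    have hq : ((n:ℝ)+1)^2 ≠ 0 := by positivity
    push_cast
    field_simp

lemma lcu_denom_eq (m : ℕ) (x : ℝ) :
    ∏ r ∈ Finset.Icc (-(m:ℤ)) (m:ℤ), ‖(x:ℂ) + (r:ℂ) + I‖
      = (∏ j ∈ Finset.range m, ((j:ℝ)+1)^2) *
        ‖((x:ℂ) + I) * ∏ j ∈ Finset.range m, (1 - ((x:ℂ)+I)^2/((j:ℂ)+1)^2)‖ := by
  have hcongr : ∀ r ∈ Finset.Icc (-(m:ℤ)) (m:ℤ),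
      ‖(x:ℂ) + (r:ℂ) + I‖ = ‖((x:ℂ) + I) + (r:ℂ)‖ := by
    intro r _; ring_nf
  rw [Finset.prod_congr rfl hcongr, ← norm_prod, lcu_prod_shift]
  have hsplit : ∏ j ∈ Finset.range m, (((x:ℂ)+I)^2 - ((j:ℂ)+1)^2)
      = ∏ j ∈ Finset.range m, ((((j:ℂ)+1)^2) * ((((x:ℂ)+I)^2/((j:ℂ)+1)^2) - 1)) := by
    apply Finset.prod_congr rfl
    intro j _
    have hq : ((j:ℂ)+1) ≠ 0 := by
      have := Nat.cast_add_one_ne_zero (R := ℂ) j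
      push_cast at this ⊢; exact this
    field_simp
  rw [hsplit, Finset.prod_mul_distrib, norm_mul, norm_mul, norm_prod, norm_prod]
  have h1 : ∏ j ∈ Finset.range m, ‖((j:ℂ)+1)^2‖
      = ∏ j ∈ Finset.range m, ((j:ℝ)+1)^2 := by
    apply Finset.prod_congr rfl
    intro j _
    have he : ((j:ℂ)+1) = ((j+1:ℕ):ℂ) := by push_cast; ring
    rw [norm_pow, he, Complex.norm_natCast]
    push_cast; ring
  have h2 : ∏ j ∈ Finset.range m, ‖(((x:ℂ)+I)^2/((j:ℂ)+1)^2) - 1‖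
      = ∏ j ∈ Finset.range m, ‖1 - (((x:ℂ)+I)^2/((j:ℂ)+1)^2)‖ := by
    apply Finset.prod_congr rfl
    intro j _
    exact norm_sub_rev _ _
  rw [h1, h2, norm_mul, norm_prod]
  ring

lemma lcu_arctan_step {v u : ℝ} (h0 : 0 ≤ v) (h : v < u) :
    (u - v)/(1+u^2) ≤ Real.arctan u - Real.arctan v := by
  obtain ⟨c, hc, heq⟩ := exists_hasDerivAt_eq_slope Real.arctan (fun x => 1/(1+x^2)) h
    Real.continuous_arctan.continuousOn (fun x _ => Real.hasDerivAt_arctan x)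
  have hc1 := hc.1
  have hc2 := hc.2
  have hcu : 1 + c^2 ≤ 1 + u^2 := by nlinarith
  have hpc : (0:ℝ) < 1 + c^2 := by positivity
  have hpu : (0:ℝ) < 1 + u^2 := by positivity
  have huv : 0 < u - v := by linarith
  have h2 : Real.arctan u - Real.arctan v = (u - v) * (1/(1+c^2)) := by
    rw [heq]; field_simp
  rw [h2, div_le_iff₀ hpu]
  have h3 : (1:ℝ) ≤ (1+u^2)/(1+c^2) := (one_le_div hpc).mpr hcu
  have h4 : (u-v) * (1/(1+c^2)) * (1+u^2) = (u-v) * ((1+u^2)/(1+c^2)) := by ring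
  rw [h4]
  nlinarith

lemma lcu_sum_icc_bound (a : ℝ) (ha : 1 ≤ a) (N : ℕ) :
    ∑ k ∈ Finset.Icc (-(N:ℤ)) (N:ℤ), 1/(((k:ℝ)/a)^2+1)
      ≤ 1 + 2*a*Real.arctan ((N:ℝ)/a) := by
  have ha0 : (0:ℝ) < a := by linarith
  induction N with
  | zero => simp
  | succ n ih =>
    have h1 : (-((n:ℤ)+1)) ∉ insert ((n:ℤ)+1) (Finset.Icc (-(n:ℤ)) (n:ℤ)) := by
      simp only [Finset.mem_insert, Finset.mem_Icc]; omega
    have h2 : ((n:ℤ)+1) ∉ Finset.Icc (-(n:ℤ)) (n:ℤ) := by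
      simp only [Finset.mem_Icc]; omega
    rw [show ((n+1:ℕ):ℤ) = (n:ℤ)+1 by push_cast; ring, lcu_icc_succ, Finset.sum_insert h1,
      Finset.sum_insert h2]
    have e1 : ((-((n:ℤ)+1) : ℤ):ℝ) = -((n:ℝ)+1) := by push_cast; ring
    have e2 : ((((n:ℤ)+1) : ℤ):ℝ) = ((n:ℝ)+1) := by push_cast; ring
    have e3 : (((n+1:ℕ)):ℝ) = (n:ℝ)+1 := by push_cast; ring
    rw [e1, e2, e3]
    have hsq : (-((n:ℝ)+1)/a)^2 = (((n:ℝ)+1)/a)^2 := by ring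
    rw [hsq]
    have hstep := lcu_arctan_step (v := (n:ℝ)/a) (u := ((n:ℝ)+1)/a)
      (by positivity) (by rw [div_lt_div_iff₀ ha0 ha0]; nlinarith)
    have hdiff : (((n:ℝ)+1)/a - (n:ℝ)/a) = 1/a := by field_simp; ring
    rw [hdiff] at hstep
    have hterm : 1/((((n:ℝ)+1)/a)^2+1)
        ≤ a * (Real.arctan (((n:ℝ)+1)/a) - Real.arctan ((n:ℝ)/a)) := by
      have hm := mul_le_mul_of_nonneg_left hstep ha0.le
      calc 1/((((n:ℝ)+1)/a)^2+1) = a * ((1/a)/(1+(((n:ℝ)+1)/a)^2)) := by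
            field_simp; ring
        _ ≤ _ := hm
    linarith [ih]

end LCUAux

lemma lcu_pointwise (m : ℕ) (x : ℝ) :
    (∏ r ∈ Finset.Icc 1 m, ((r:ℝ)^2+4)) /
      ((x^2+1) * ∏ r ∈ Finset.Icc (-(m:ℤ)) (m:ℤ), ‖(x:ℂ) + (r:ℂ) + I‖)
    ≤ (Real.sinh (2*π)/(2*π)) * (1/(x^2+1)) := by
  have h2pi : (0:ℝ) < 2*π := by positivity
  have hS0 : (0:ℝ) ≤ Real.sinh (2*π)/(2*π) :=
    div_nonneg (Real.sinh_nonneg_iff.mpr h2pi.le) h2pi.le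
  have hQ : (0:ℝ) < ∏ j ∈ Finset.range m, ((j:ℝ)+1)^2 :=
    Finset.prod_pos (fun j _ => by positivity)
  have hu := lcu_euler_prod_ge_one x m
  have hE0 : (0:ℝ) ≤ ∏ j ∈ Finset.range m, (1 + 4/((j:ℝ)+1)^2) :=
    Finset.prod_nonneg (fun j _ => by positivity)
  have hES := lcu_prod_one_add_le m
  have hx1 : (0:ℝ) < x^2+1 := by positivity
  rw [lcu_numer_eq, lcu_denom_eq, Finset.prod_mul_distrib, mul_one_div]
  set Q := ∏ j ∈ Finset.range m, ((j:ℝ)+1)^2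
  set E := ∏ j ∈ Finset.range m, (1 + 4/((j:ℝ)+1)^2)
  set u := ‖((x:ℂ) + I) * ∏ j ∈ Finset.range m, (1 - ((x:ℂ)+I)^2/((j:ℂ)+1)^2)‖
  have hkey : Q*E/((x^2+1)*(Q*u)) = E/((x^2+1)*u) := by
    rw [show (x^2+1)*(Q*u) = Q*((x^2+1)*u) by ring,
      mul_div_mul_left _ _ (ne_of_gt hQ)]
  rw [hkey]
  exact div_le_div₀ hS0 hES hx1 (le_mul_of_one_le_right hx1.le hu)

lemma lcu_nonneg (m : ℕ) (x : ℝ) :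
    0 ≤ (∏ r ∈ Finset.Icc 1 m, ((r:ℝ)^2+4)) /
      ((x^2+1) * ∏ r ∈ Finset.Icc (-(m:ℤ)) (m:ℤ), ‖(x:ℂ) + (r:ℂ) + I‖) := by
  apply div_nonneg
  · exact Finset.prod_nonneg (fun r _ => by positivity)
  · exact mul_nonneg (by positivity)
      (Finset.prod_nonneg (fun r _ => norm_nonneg _))




open Complex
open scoped Real

/-- **Bound on the ℓ¹-weight of the LCU coefficients** (coefficient-sum estimate in the
proof of Theorem 3). For real `a ≥ 1` and natural `m ≥ 1`, the sum over `k ∈ ℤ` of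
`(∏_{r=1}^{m} (r² + 4)) / (((k/a)² + 1) ∏_{r=-m}^{m} |k/a + r + i|)` converges and is at
most `a(π + 1)·sinh(2π)/(2π)`. -/
theorem lcu_coefficient_sum_bound (a : ℝ) (ha : 1 ≤ a) (m : ℕ) (hm : 1 ≤ m) :
    Summable (fun k : ℤ =>
      (∏ r ∈ Finset.Icc 1 m, ((r : ℝ) ^ 2 + 4)) /
        ((((k : ℝ) / a) ^ 2 + 1) *
          ∏ r ∈ Finset.Icc (-(m : ℤ)) (m : ℤ),
            ‖(((k : ℝ) / a : ℝ) : ℂ) + (r : ℂ) + Complex.I‖)) ∧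
    (∑' k : ℤ,
        (∏ r ∈ Finset.Icc 1 m, ((r : ℝ) ^ 2 + 4)) /
          ((((k : ℝ) / a) ^ 2 + 1) *
            ∏ r ∈ Finset.Icc (-(m : ℤ)) (m : ℤ),
              ‖(((k : ℝ) / a : ℝ) : ℂ) + (r : ℂ) + Complex.I‖)) ≤
      a * (π + 1) * Real.sinh (2 * π) / (2 * π) := by
  have ha0 : (0:ℝ) < a := lt_of_lt_of_le one_pos ha
  have h2pi : (0:ℝ) < 2*π := by positivity
  have hS0 : (0:ℝ) ≤ Real.sinh (2*π)/(2*π) :=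
    div_nonneg (Real.sinh_nonneg_iff.mpr h2pi.le) h2pi.le
  have hpoint : ∀ k : ℤ,
      (∏ r ∈ Finset.Icc 1 m, ((r : ℝ) ^ 2 + 4)) /
        ((((k : ℝ) / a) ^ 2 + 1) *
          ∏ r ∈ Finset.Icc (-(m : ℤ)) (m : ℤ),
            ‖(((k : ℝ) / a : ℝ) : ℂ) + (r : ℂ) + Complex.I‖)
      ≤ (Real.sinh (2*π)/(2*π)) * (1/(((k:ℝ)/a)^2+1)) :=
    fun k => lcu_pointwise m ((k:ℝ)/a)
  have hF0 : ∀ k : ℤ, 0 ≤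
      (∏ r ∈ Finset.Icc 1 m, ((r : ℝ) ^ 2 + 4)) /
        ((((k : ℝ) / a) ^ 2 + 1) *
          ∏ r ∈ Finset.Icc (-(m : ℤ)) (m : ℤ),
            ‖(((k : ℝ) / a : ℝ) : ℂ) + (r : ℂ) + Complex.I‖) :=
    fun k => lcu_nonneg m ((k:ℝ)/a)
  -- summability of the majorant
  have hbase : Summable (fun n : ℕ => 1/((n:ℝ)+1)^2) := by
    have h1 : Summable (fun n : ℕ => 1/(n:ℝ)^2) :=
      Real.summable_one_div_nat_pow.mpr one_lt_two
    have h2 := (summable_nat_add_iff (f := fun n : ℕ => 1/(n:ℝ)^2) 1).mpr h1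
    refine h2.congr (fun n => ?_)
    push_cast
    ring
  have hnat : Summable (fun n : ℕ => (Real.sinh (2*π)/(2*π)) * (1/(((n:ℝ)/a)^2+1))) := by
    have hmaj : Summable (fun n : ℕ => (Real.sinh (2*π)/(2*π))*(2*a^2) * (1/((n:ℝ)+1)^2)) :=
      hbase.mul_left _
    have hpos : ∀ n : ℕ, (0:ℝ) ≤ (Real.sinh (2*π)/(2*π)) * (1/(((n:ℝ)/a)^2+1)) := by
      intro n
      have h0 : (0:ℝ) ≤ 1/(((n:ℝ)/a)^2+1) := by positivity
      exact mul_nonneg hS0 h0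
    have hbnd : ∀ n : ℕ, (Real.sinh (2*π)/(2*π)) * (1/(((n:ℝ)/a)^2+1))
        ≤ (Real.sinh (2*π)/(2*π))*(2*a^2) * (1/((n:ℝ)+1)^2) := by
      intro n
      have h1 : 1/(((n:ℝ)/a)^2+1) ≤ 2*a^2/((n:ℝ)+1)^2 := by
        rw [div_le_div_iff₀ (by positivity) (by positivity)]
        have hxa : ((n:ℝ)/a)^2*a^2 = (n:ℝ)^2 := by field_simp
        nlinarith [sq_nonneg ((n:ℝ)-1), sq_nonneg (n:ℝ), ha]
      calc (Real.sinh (2*π)/(2*π)) * (1/(((n:ℝ)/a)^2+1))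
          ≤ (Real.sinh (2*π)/(2*π)) * (2*a^2/((n:ℝ)+1)^2) :=
            mul_le_mul_of_nonneg_left h1 hS0
        _ = (Real.sinh (2*π)/(2*π))*(2*a^2) * (1/((n:ℝ)+1)^2) := by ring
    exact Summable.of_nonneg_of_le hpos hbnd hmaj
  have hG : Summable (fun k : ℤ => (Real.sinh (2*π)/(2*π)) * (1/(((k:ℝ)/a)^2+1))) := by
    apply Summable.of_nat_of_neg
    · exact hnat.congr (fun n => by norm_num)
    · refine hnat.congr (fun n => ?_)
      norm_num
      ring
  have hF : Summable (fun k : ℤ =>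
      (∏ r ∈ Finset.Icc 1 m, ((r : ℝ) ^ 2 + 4)) /
        ((((k : ℝ) / a) ^ 2 + 1) *
          ∏ r ∈ Finset.Icc (-(m : ℤ)) (m : ℤ),
            ‖(((k : ℝ) / a : ℝ) : ℂ) + (r : ℂ) + Complex.I‖)) :=
    Summable.of_nonneg_of_le hF0 hpoint hG
  refine ⟨hF, ?_⟩
  have htsumG : (∑' k : ℤ, (Real.sinh (2*π)/(2*π)) * (1/(((k:ℝ)/a)^2+1)))
      ≤ (Real.sinh (2*π)/(2*π)) * (1+π*a) := by
    apply Summable.tsum_le_of_sum_le hG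
    intro s
    rw [← Finset.mul_sum]
    apply mul_le_mul_of_nonneg_left ?_ hS0
    set N := s.sup Int.natAbs with hN
    have hsub : s ⊆ Finset.Icc (-(N:ℤ)) (N:ℤ) := by
      intro k hk
      simp only [Finset.mem_Icc]
      have := Finset.le_sup (f := Int.natAbs) hk
      omega
    calc ∑ k ∈ s, 1/(((k:ℝ)/a)^2+1)
        ≤ ∑ k ∈ Finset.Icc (-(N:ℤ)) (N:ℤ), 1/(((k:ℝ)/a)^2+1) :=
          Finset.sum_le_sum_of_subset_of_nonneg hsub (fun k _ _ => by positivity)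
      _ ≤ 1 + 2*a*Real.arctan ((N:ℝ)/a) := lcu_sum_icc_bound a ha N
      _ ≤ 1 + π*a := by
          have harc := Real.arctan_lt_pi_div_two ((N:ℝ)/a)
          nlinarith [ha0]
  calc (∑' k : ℤ,
        (∏ r ∈ Finset.Icc 1 m, ((r : ℝ) ^ 2 + 4)) /
          ((((k : ℝ) / a) ^ 2 + 1) *
            ∏ r ∈ Finset.Icc (-(m : ℤ)) (m : ℤ),
              ‖(((k : ℝ) / a : ℝ) : ℂ) + (r : ℂ) + Complex.I‖))
      ≤ ∑' k : ℤ, (Real.sinh (2*π)/(2*π)) * (1/(((k:ℝ)/a)^2+1)) :=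
        Summable.tsum_le_tsum hpoint hF hG
    _ ≤ (Real.sinh (2*π)/(2*π)) * (1+π*a) := htsumG
    _ ≤ a * (π + 1) * Real.sinh (2 * π) / (2 * π) := by
        have heq : a * (π + 1) * Real.sinh (2 * π) / (2 * π)
            = (Real.sinh (2*π)/(2*π)) * (a*(π+1)) := by ring
        rw [heq]
        nlinarith [mul_nonneg hS0 (sub_nonneg.mpr ha), Real.pi_pos]
end

section
/- Polynomial approximation error bound via contour integration (Section 6): Let A be a d×d complex matrix, let ρ > 0 satisfy ‖A‖ < ρ in the spectral norm, let f : ℂ → ℂ be continuous on the circle {z : |z| = ρ}, let p be a polynomial over ℂ, and let C_res ≥ 0 and C_f ≥ 0 satisfy ‖(z·I − A)^{−1}‖ ≤ C_res and |f(z) − p(z)| ≤ C_f for all z with |z| = ρ. Then ‖(2πi)^{−1} · ∮_{|z|=ρ} f(z)·(z·I − A)^{−1} dz − p(A)‖ ≤ ρ · C_res · C_f. -/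
open Matrix Complex
open scoped Real Matrix.Norms.L2Operator

private lemma circleIntegral_add' {E : Type*} [NormedAddCommGroup E] [NormedSpace ℂ E]
    {f g : ℂ → E} {c : ℂ} {R : ℝ} (hf : CircleIntegrable f c R)
    (hg : CircleIntegrable g c R) :
    (∮ z in C(c, R), (f z + g z)) = (∮ z in C(c, R), f z) + ∮ z in C(c, R), g z := by
  simp only [circleIntegral, smul_add, intervalIntegral.integral_add hf.out hg.out]

private lemma circleIntegral_finset_sum' {E : Type*} [NormedAddCommGroup E] [NormedSpace ℂ E]
    {ι : Type*} (s : Finset ι) {f : ι → ℂ → E} {c : ℂ} {R : ℝ}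
    (hf : ∀ i ∈ s, CircleIntegrable (f i) c R) :
    (∮ z in C(c, R), (∑ i ∈ s, f i z)) = ∑ i ∈ s, ∮ z in C(c, R), f i z := by
  simp only [circleIntegral, Finset.smul_sum,
    intervalIntegral.integral_finset_sum (fun i hi => (hf i hi).out)]

section Aux

variable {d : ℕ} (A : Matrix (Fin d) (Fin d) ℂ) {ρ : ℝ}

private lemma aux_isUnit (hρ : 0 < ρ) (hA : ‖A‖ < ρ) {z : ℂ} (hz : ‖z‖ = ρ) :
    IsUnit ((z • (1 : Matrix (Fin d) (Fin d) ℂ) - A).det) := by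
  have hz0 : z ≠ 0 := by
    intro h; rw [h] at hz; simp at hz; exact hρ.ne' hz.symm
  have hn : ‖z⁻¹ • A‖ < 1 := by
    rw [norm_smul, norm_inv, hz]
    rw [show ρ⁻¹ * ‖A‖ = ‖A‖ / ρ by ring]
    exact (div_lt_one hρ).mpr hA
  have hu : IsUnit (1 - z⁻¹ • A) := isUnit_one_sub_of_norm_lt_one hn
  have hfact : z • (1 : Matrix (Fin d) (Fin d) ℂ) - A
      = (z • (1 : Matrix (Fin d) (Fin d) ℂ)) * (1 - z⁻¹ • A) := by
    rw [mul_sub, mul_one, smul_mul_assoc, one_mul, smul_smul, mul_inv_cancel₀ hz0, one_smul]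
  rw [← Matrix.isUnit_iff_isUnit_det, hfact]
  refine IsUnit.mul ?_ hu
  rw [← Algebra.algebraMap_eq_smul_one]
  exact (isUnit_iff_ne_zero.mpr hz0).map (algebraMap ℂ _)

private lemma aux_cont (hρ : 0 < ρ) (hA : ‖A‖ < ρ) :
    ContinuousOn (fun z : ℂ => (z • (1 : Matrix (Fin d) (Fin d) ℂ) - A)⁻¹)
      (Metric.sphere (0 : ℂ) ρ) := by
  intro z hz
  rw [Metric.mem_sphere, dist_zero_right] at hz
  refine ContinuousAt.continuousWithinAt ?_
  have h1 : ContinuousAt (fun w : ℂ => w • (1 : Matrix (Fin d) (Fin d) ℂ) - A) z := by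
    fun_prop
  have h2 : ContinuousAt Inv.inv (z • (1 : Matrix (Fin d) (Fin d) ℂ) - A) := by
    refine continuousAt_matrix_inv _ ?_
    have hdet := aux_isUnit A hρ hA hz
    have hne : (z • (1 : Matrix (Fin d) (Fin d) ℂ) - A).det ≠ 0 := hdet.ne_zero
    rw [Ring.inverse_eq_inv']
    exact continuousAt_inv₀ hne
  exact ContinuousAt.comp (f := fun w : ℂ => w • (1 : Matrix (Fin d) (Fin d) ℂ) - A) h2 h1

private lemma aux_resolvent_id (hρ : 0 < ρ) (hA : ‖A‖ < ρ) {z : ℂ} (hz : ‖z‖ = ρ) :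
    (z • (1 : Matrix (Fin d) (Fin d) ℂ) - A)⁻¹
      = z⁻¹ • (1 : Matrix (Fin d) (Fin d) ℂ)
        + z⁻¹ • (A * (z • (1 : Matrix (Fin d) (Fin d) ℂ) - A)⁻¹) := by
  have hz0 : z ≠ 0 := by
    intro h; rw [h] at hz; simp at hz; exact hρ.ne' hz.symm
  set R := (z • (1 : Matrix (Fin d) (Fin d) ℂ) - A)⁻¹ with hR
  have hmul : (z • (1 : Matrix (Fin d) (Fin d) ℂ) - A) * R = 1 :=
    Matrix.mul_nonsing_inv _ (aux_isUnit A hρ hA hz)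
  have h1 : z • R - A * R = 1 := by
    rw [show z • R = (z • (1 : Matrix (Fin d) (Fin d) ℂ)) * R by
      rw [smul_mul_assoc, one_mul], ← sub_mul, hmul]
  have h2 : z • R = 1 + A * R := by
    rw [sub_eq_iff_eq_add] at h1; exact h1
  calc R = z⁻¹ • (z • R) := by rw [inv_smul_smul₀ hz0]
    _ = z⁻¹ • ((1 : Matrix (Fin d) (Fin d) ℂ) + A * R) := by rw [h2]
    _ = _ := by rw [smul_add]

private lemma aux_zpow_integral (hρ : 0 < ρ) (m : ℤ) :
    (∮ z in C(0, ρ), z ^ m) = if m = -1 then 2 * (π : ℂ) * Complex.I else 0 := by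
  have h0 : (∮ z in C(0, ρ), z ^ m) = ∮ z in C(0, ρ), (z - 0) ^ m := by
    simp only [sub_zero]
  rw [h0]
  split_ifs with h
  · subst h
    have := circleIntegral.integral_sub_inv_of_mem_ball
      (Metric.mem_ball_self hρ : (0 : ℂ) ∈ Metric.ball 0 ρ)
    simpa only [_root_.zpow_neg_one] using this
  · exact circleIntegral.integral_sub_zpow_of_ne h 0 0 ρ

private lemma aux_int1 (hρ : 0 < ρ) (hA : ‖A‖ < ρ) (n : ℤ) (M : Matrix (Fin d) (Fin d) ℂ) :
    CircleIntegrable (fun z : ℂ =>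
      z ^ n • (M * (z • (1 : Matrix (Fin d) (Fin d) ℂ) - A)⁻¹)) 0 ρ := by
  refine ContinuousOn.circleIntegrable hρ.le ?_
  refine ContinuousOn.smul (f := fun z : ℂ => z ^ n) ?_ (continuousOn_const.mul (aux_cont A hρ hA))
  refine ContinuousOn.zpow₀ continuousOn_id n fun z hz => Or.inl ?_
  rw [Metric.mem_sphere, dist_zero_right] at hz
  intro h; simp only [id_eq] at h; rw [h] at hz; simp at hz; exact hρ.ne' hz.symm

private lemma aux_int2 (hρ : 0 < ρ) (n : ℤ) (M : Matrix (Fin d) (Fin d) ℂ) :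
    CircleIntegrable (fun z : ℂ => z ^ n • M) 0 ρ := by
  refine ContinuousOn.circleIntegrable hρ.le ?_
  refine ContinuousOn.smul (f := fun z : ℂ => z ^ n) ?_ continuousOn_const
  refine ContinuousOn.zpow₀ continuousOn_id n fun z hz => Or.inl ?_
  rw [Metric.mem_sphere, dist_zero_right] at hz
  intro h; simp only [id_eq] at h; rw [h] at hz; simp at hz; exact hρ.ne' hz.symm

private lemma aux_step (hρ : 0 < ρ) (hA : ‖A‖ < ρ) (n : ℤ) (M : Matrix (Fin d) (Fin d) ℂ) :
    (∮ z in C(0, ρ), z ^ n • (M * (z • (1 : Matrix (Fin d) (Fin d) ℂ) - A)⁻¹))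
      = (if n - 1 = -1 then 2 * (π : ℂ) * Complex.I else 0) • M
        + ∮ z in C(0, ρ), z ^ (n - 1) • ((M * A) * (z • (1 : Matrix (Fin d) (Fin d) ℂ) - A)⁻¹) := by
  have hcongr : Set.EqOn
      (fun z : ℂ => z ^ n • (M * (z • (1 : Matrix (Fin d) (Fin d) ℂ) - A)⁻¹))
      (fun z : ℂ => z ^ (n - 1) • M
        + z ^ (n - 1) • ((M * A) * (z • (1 : Matrix (Fin d) (Fin d) ℂ) - A)⁻¹))
      (Metric.sphere (0 : ℂ) ρ) := by
    intro z hz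
    rw [Metric.mem_sphere, dist_zero_right] at hz
    have hz0 : z ≠ 0 := by
      intro h; rw [h] at hz; simp at hz; exact hρ.ne' hz.symm
    simp only
    conv_lhs => rw [aux_resolvent_id A hρ hA hz]
    rw [mul_add, mul_smul_comm, mul_smul_comm, mul_one,
      smul_add, smul_smul, smul_smul, ← zpow_sub_one₀ hz0, ← mul_assoc]
  rw [circleIntegral.integral_congr hρ.le hcongr,
    circleIntegral_add' (aux_int2 hρ (n - 1) M) (aux_int1 A hρ hA (n - 1) (M * A)),
    circleIntegral.integral_smul_const, aux_zpow_integral hρ (n - 1)]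

private lemma aux_neg (hρ : 0 < ρ) (hA : ‖A‖ < ρ) (Cres : ℝ)
    (hres : ∀ z : ℂ, ‖z‖ = ρ →
      ‖(z • (1 : Matrix (Fin d) (Fin d) ℂ) - A)⁻¹‖ ≤ Cres)
    (M : Matrix (Fin d) (Fin d) ℂ) :
    (∮ z in C(0, ρ), z ^ (-1 : ℤ) • (M * (z • (1 : Matrix (Fin d) (Fin d) ℂ) - A)⁻¹)) = 0 := by
  have hCres : 0 ≤ Cres :=
    le_trans (norm_nonneg _) (hres (ρ : ℂ) (by rw [Complex.norm_real, Real.norm_of_nonneg hρ.le]))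
  have key : ∀ j : ℕ, ∀ N : Matrix (Fin d) (Fin d) ℂ,
      (∮ z in C(0, ρ), z ^ (-1 : ℤ) • (N * (z • (1 : Matrix (Fin d) (Fin d) ℂ) - A)⁻¹))
        = ∮ z in C(0, ρ),
            z ^ (-1 - (j : ℤ)) • ((N * A ^ j) * (z • (1 : Matrix (Fin d) (Fin d) ℂ) - A)⁻¹) := by
    intro j
    induction j with
    | zero => intro N; simp
    | succ j ih =>
        intro N
        rw [ih N, aux_step A hρ hA (-1 - (j : ℤ)) (N * A ^ j)]
        have h1 : ¬(-1 - (j : ℤ) - 1 = -1) := by omega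
        rw [if_neg h1, zero_smul, zero_add]
        have h2 : (-1 - (j : ℤ) - 1) = -1 - ((j : ℕ) + 1 : ℕ) := by push_cast; ring
        rw [h2, mul_assoc, ← pow_succ]
  have hb : ∀ j : ℕ,
      ‖∮ z in C(0, ρ),
          z ^ (-1 : ℤ) • (M * (z • (1 : Matrix (Fin d) (Fin d) ℂ) - A)⁻¹)‖
        ≤ (2 * π * ‖M‖ * Cres) * (‖A‖ / ρ) ^ (j + 1) := by
    intro j
    rw [key (j + 1) M]
    have hbd : ∀ z ∈ Metric.sphere (0 : ℂ) ρ,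
        ‖z ^ (-1 - ((j + 1 : ℕ) : ℤ)) •
            ((M * A ^ (j + 1)) * (z • (1 : Matrix (Fin d) (Fin d) ℂ) - A)⁻¹)‖
          ≤ (ρ * ρ ^ (j + 1))⁻¹ * (‖M‖ * ‖A‖ ^ (j + 1) * Cres) := by
      intro z hz
      rw [Metric.mem_sphere, dist_zero_right] at hz
      have habs : ‖z‖ = ρ := by exact hz
      rw [norm_smul, norm_zpow, hz]
      have e1 : ρ ^ (-1 - ((j + 1 : ℕ) : ℤ)) = (ρ * ρ ^ (j + 1))⁻¹ := by
        rw [show (-1 - ((j + 1 : ℕ) : ℤ)) = -(1 + (j + 1 : ℕ)) by push_cast; ring,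
          _root_.zpow_neg, zpow_add₀ hρ.ne', zpow_one, zpow_natCast]
      rw [e1]
      refine mul_le_mul_of_nonneg_left ?_ (by positivity)
      calc ‖(M * A ^ (j + 1)) * (z • (1 : Matrix (Fin d) (Fin d) ℂ) - A)⁻¹‖
          ≤ ‖M * A ^ (j + 1)‖ * ‖(z • (1 : Matrix (Fin d) (Fin d) ℂ) - A)⁻¹‖ := norm_mul_le _ _
        _ ≤ (‖M‖ * ‖A‖ ^ (j + 1)) * Cres := by
            refine mul_le_mul ?_ (hres z habs) (norm_nonneg _) (by positivity)
            calc ‖M * A ^ (j + 1)‖ ≤ ‖M‖ * ‖A ^ (j + 1)‖ := norm_mul_le _ _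
              _ ≤ ‖M‖ * ‖A‖ ^ (j + 1) :=
                  mul_le_mul_of_nonneg_left (norm_pow_le' A (Nat.succ_pos j)) (norm_nonneg _)
        _ = ‖M‖ * ‖A‖ ^ (j + 1) * Cres := by ring
    refine le_trans (circleIntegral.norm_integral_le_of_norm_le_const hρ.le hbd) (le_of_eq ?_)
    rw [div_pow]
    field_simp
  have hr0 : 0 ≤ ‖A‖ / ρ := by positivity
  have hr1 : ‖A‖ / ρ < 1 := (div_lt_one hρ).mpr hA
  have htend : Filter.Tendsto (fun j : ℕ => (2 * π * ‖M‖ * Cres) * (‖A‖ / ρ) ^ (j + 1))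
      Filter.atTop (nhds 0) := by
    have h0 := (tendsto_pow_atTop_nhds_zero_of_lt_one hr0 hr1).const_mul (2 * π * ‖M‖ * Cres)
    rw [mul_zero] at h0
    exact h0.comp (Filter.tendsto_add_atTop_nat 1)
  have hle := ge_of_tendsto' htend hb
  have := norm_nonneg (∮ z in C(0, ρ),
    z ^ (-1 : ℤ) • (M * (z • (1 : Matrix (Fin d) (Fin d) ℂ) - A)⁻¹))
  rw [← norm_eq_zero]
  linarith

private lemma aux_monomial (hρ : 0 < ρ) (hA : ‖A‖ < ρ) (Cres : ℝ)
    (hres : ∀ z : ℂ, ‖z‖ = ρ →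
      ‖(z • (1 : Matrix (Fin d) (Fin d) ℂ) - A)⁻¹‖ ≤ Cres) :
    ∀ (k : ℕ) (M : Matrix (Fin d) (Fin d) ℂ),
      (∮ z in C(0, ρ), z ^ (k : ℤ) • (M * (z • (1 : Matrix (Fin d) (Fin d) ℂ) - A)⁻¹))
        = (2 * (π : ℂ) * Complex.I) • (M * A ^ k) := by
  intro k
  induction k with
  | zero =>
      intro M
      rw [aux_step A hρ hA ((0 : ℕ) : ℤ) M]
      have h1 : ((0 : ℕ) : ℤ) - 1 = -1 := by norm_num
      rw [h1, if_pos rfl, aux_neg A hρ hA Cres hres (M * A), add_zero, pow_zero, mul_one]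
  | succ k ih =>
      intro M
      rw [aux_step A hρ hA ((k + 1 : ℕ) : ℤ) M]
      have h1 : ¬(((k + 1 : ℕ) : ℤ) - 1 = -1) := by omega
      have h2 : ((k + 1 : ℕ) : ℤ) - 1 = (k : ℤ) := by push_cast; ring
      rw [if_neg h1, zero_smul, zero_add, h2, ih (M * A)]
      congr 1
      rw [mul_assoc, ← pow_succ']

private lemma aux_cauchy (hρ : 0 < ρ) (hA : ‖A‖ < ρ) (Cres : ℝ)
    (hres : ∀ z : ℂ, ‖z‖ = ρ →
      ‖(z • (1 : Matrix (Fin d) (Fin d) ℂ) - A)⁻¹‖ ≤ Cres) (p : Polynomial ℂ) :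
    (∮ z in C(0, ρ),
        Polynomial.eval z p • (z • (1 : Matrix (Fin d) (Fin d) ℂ) - A)⁻¹)
      = (2 * (π : ℂ) * Complex.I) • (Polynomial.aeval A p : Matrix (Fin d) (Fin d) ℂ) := by
  have hint : ∀ k ∈ Finset.range (p.natDegree + 1),
      CircleIntegrable (fun z : ℂ =>
        (p.coeff k * z ^ k) • (z • (1 : Matrix (Fin d) (Fin d) ℂ) - A)⁻¹) 0 ρ := by
    intro k _
    refine ContinuousOn.circleIntegrable hρ.le ?_
    exact (Continuous.continuousOn (f := fun z : ℂ => p.coeff k * z ^ k) (by continuity)).smul (aux_cont A hρ hA)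
  have hcongr : Set.EqOn
      (fun z : ℂ => Polynomial.eval z p • (z • (1 : Matrix (Fin d) (Fin d) ℂ) - A)⁻¹)
      (fun z : ℂ => ∑ k ∈ Finset.range (p.natDegree + 1),
        (p.coeff k * z ^ k) • (z • (1 : Matrix (Fin d) (Fin d) ℂ) - A)⁻¹)
      (Metric.sphere (0 : ℂ) ρ) := by
    intro z _
    simp only
    rw [Polynomial.eval_eq_sum_range, Finset.sum_smul]
  rw [circleIntegral.integral_congr hρ.le hcongr, circleIntegral_finset_sum' _ hint]
  have hterm : ∀ k ∈ Finset.range (p.natDegree + 1),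
      (∮ z in C(0, ρ),
        (p.coeff k * z ^ k) • (z • (1 : Matrix (Fin d) (Fin d) ℂ) - A)⁻¹)
        = p.coeff k • ((2 * (π : ℂ) * Complex.I) • A ^ k) := by
    intro k _
    have e1 : (fun z : ℂ =>
        (p.coeff k * z ^ k) • (z • (1 : Matrix (Fin d) (Fin d) ℂ) - A)⁻¹)
        = fun z : ℂ => p.coeff k •
          (z ^ (k : ℤ) • ((1 : Matrix (Fin d) (Fin d) ℂ) * (z • (1 : Matrix (Fin d) (Fin d) ℂ) - A)⁻¹)) := by
      funext z
      rw [one_mul, smul_smul, zpow_natCast]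
    rw [e1, circleIntegral.integral_smul, aux_monomial A hρ hA Cres hres k 1, one_mul]
  rw [Finset.sum_congr rfl hterm, Polynomial.aeval_eq_sum_range, Finset.smul_sum]
  refine Finset.sum_congr rfl fun k _ => ?_
  rw [smul_comm]

end Aux

/-- **Polynomial approximation error bound via contour integration** (Section 6).
If `‖A‖ < ρ` in the spectral norm, `f` is continuous on the circle of radius `ρ`, and
`‖(zI - A)⁻¹‖ ≤ C_res`, `|f z - p z| ≤ C_f` for all `z` on that circle, then
`‖(2πi)⁻¹ ∮_{|z|=ρ} f(z)(zI - A)⁻¹ dz - p(A)‖ ≤ ρ · C_res · C_f`. -/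
theorem polynomial_approximation_error_bound
    (d : ℕ) (A : Matrix (Fin d) (Fin d) ℂ)
    (ρ : ℝ) (hρ : 0 < ρ) (hA : ‖A‖ < ρ)
    (f : ℂ → ℂ) (hf : ContinuousOn f (Metric.sphere (0 : ℂ) ρ))
    (p : Polynomial ℂ)
    (Cres Cf : ℝ) (hCres : 0 ≤ Cres) (hCf : 0 ≤ Cf)
    (hres : ∀ z : ℂ, ‖z‖ = ρ →
      ‖(z • (1 : Matrix (Fin d) (Fin d) ℂ) - A)⁻¹‖ ≤ Cres)
    (hfp : ∀ z : ℂ, ‖z‖ = ρ → ‖f z - Polynomial.eval z p‖ ≤ Cf) :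
    ‖(2 * (π : ℂ) * Complex.I)⁻¹ •
          (∮ z in C(0, ρ), f z • (z • (1 : Matrix (Fin d) (Fin d) ℂ) - A)⁻¹) -
        Polynomial.aeval A p‖ ≤ ρ * Cres * Cf := by
  have h2pi : (2 * (π : ℂ) * Complex.I) ≠ 0 := by
    simp [Real.pi_ne_zero, Complex.I_ne_zero, Complex.ofReal_ne_zero]
  have hfint : CircleIntegrable
      (fun z : ℂ => f z • (z • (1 : Matrix (Fin d) (Fin d) ℂ) - A)⁻¹) 0 ρ :=
    ContinuousOn.circleIntegrable hρ.le (hf.smul (aux_cont A hρ hA))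
  have hpint : CircleIntegrable
      (fun z : ℂ => Polynomial.eval z p • (z • (1 : Matrix (Fin d) (Fin d) ℂ) - A)⁻¹) 0 ρ :=
    ContinuousOn.circleIntegrable hρ.le
      ((p.continuous_aeval.continuousOn).smul (aux_cont A hρ hA))
  have hA' : (Polynomial.aeval A p : Matrix (Fin d) (Fin d) ℂ)
      = (2 * (π : ℂ) * Complex.I)⁻¹ •
        ((2 * (π : ℂ) * Complex.I) • (Polynomial.aeval A p : Matrix (Fin d) (Fin d) ℂ)) :=
    (inv_smul_smul₀ h2pi _).symm
  rw [hA', ← aux_cauchy A hρ hA Cres hres p, ← smul_sub,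
    ← circleIntegral.integral_sub hfint hpint]
  have hcongr : Set.EqOn
      (fun z : ℂ => f z • (z • (1 : Matrix (Fin d) (Fin d) ℂ) - A)⁻¹
        - Polynomial.eval z p • (z • (1 : Matrix (Fin d) (Fin d) ℂ) - A)⁻¹)
      (fun z : ℂ => (f z - Polynomial.eval z p) • (z • (1 : Matrix (Fin d) (Fin d) ℂ) - A)⁻¹)
      (Metric.sphere (0 : ℂ) ρ) := by
    intro z _
    simp only
    rw [sub_smul]
  rw [circleIntegral.integral_congr hρ.le hcongr, norm_smul]
  have hnorm : ‖(2 * (π : ℂ) * Complex.I)⁻¹‖ = (2 * π)⁻¹ := by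
    rw [norm_inv]
    congr 1
    simp [Complex.norm_real, abs_of_pos Real.pi_pos]
  have hbd : ∀ z ∈ Metric.sphere (0 : ℂ) ρ,
      ‖(f z - Polynomial.eval z p) • (z • (1 : Matrix (Fin d) (Fin d) ℂ) - A)⁻¹‖
        ≤ Cf * Cres := by
    intro z hz
    rw [Metric.mem_sphere, dist_zero_right] at hz
    rw [norm_smul]
    exact mul_le_mul (hfp z hz) (hres z hz) (norm_nonneg _) hCf
  calc ‖(2 * (π : ℂ) * Complex.I)⁻¹‖ *
        ‖∮ z in C(0, ρ),
          (f z - Polynomial.eval z p) • (z • (1 : Matrix (Fin d) (Fin d) ℂ) - A)⁻¹‖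
      ≤ (2 * π)⁻¹ * (2 * π * ρ * (Cf * Cres)) := by
        rw [hnorm]
        exact mul_le_mul_of_nonneg_left
          (circleIntegral.norm_integral_le_of_norm_le_const hρ.le hbd) (by positivity)
    _ = ρ * Cres * Cf := by
        have : (π : ℝ) ≠ 0 := Real.pi_ne_zero
        field_simp
end
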